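/- arXiv:math/0703546 — 7 statements merged into one kernel-verified Lean document; each statement's English description precedes it below -/
import Mathlib

section
/- For integers 0 ≤ l, j ≤ n and α ≥ 1, the telescoping identity R(n;l,j) = Σ_{k=max(l,j)}^n C(k;l,j) holds, where R(n;l,j) = (−1)^{l+j} ([l+j+α]_q/[α]_q) (n+l+α choose n−j)_q (n+j+α choose n−l)_q (l+j+α−1 choose l)_q (l+j+α−1 choose j)_q and C(k;l,j) = (−1)^{l+j} ([2k+α]_q/[α]_q) (k choose l)_q (k choose j)_q (k+l+α−1 choose k)_q (k+j+α−1 choose k)_q. -/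
noncomputable def qint (s : ℂ) (m : ℕ) : ℂ := (s ^ m - s⁻¹ ^ m) / (s - s⁻¹)

noncomputable def qbinom (s : ℂ) (m k : ℕ) : ℂ :=
  ∏ j ∈ Finset.range k, qint s (m - j) / qint s (j + 1)

noncomputable def qfact (s : ℂ) (m : ℕ) : ℂ := ∏ i ∈ Finset.range m, qint s (i + 1)

lemma qfact_zero (s : ℂ) : qfact s 0 = 1 := Finset.prod_range_zero _

lemma qfact_succ (s : ℂ) (m : ℕ) : qfact s (m + 1) = qfact s m * qint s (m + 1) :=
  Finset.prod_range_succ _ _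

lemma qbinom_zero (s : ℂ) (m : ℕ) : qbinom s m 0 = 1 := Finset.prod_range_zero _

lemma sub_inv_ne (s : ℂ) (hs0 : s ≠ 0) (h2 : s ^ 2 ≠ 1) : s - s⁻¹ ≠ 0 := by
  intro hc
  apply h2
  have h' : s⁻¹ = s := by linear_combination -hc
  rw [sq]
  nth_rewrite 2 [← h']
  exact mul_inv_cancel₀ hs0

lemma prod_desc (s : ℂ) (m : ℕ) : ∀ k, k ≤ m →
    (∏ i ∈ Finset.range k, qint s (m - i)) * qfact s (m - k) = qfact s m := by
  intro k
  induction k with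
  | zero => simp [qfact]
  | succ k ih =>
    intro hk
    have h1 : m - k = (m - (k + 1)) + 1 := by omega
    rw [Finset.prod_range_succ, mul_assoc, mul_comm (qint s (m - k)), h1, ← qfact_succ, ← h1,
      ih (by omega)]

lemma qint_ne (s : ℂ) (hs0 : s ≠ 0) (h2 : s ^ 2 ≠ 1) (m : ℕ) (h : (s ^ 2) ^ m ≠ 1) :
    qint s m ≠ 0 := by
  apply div_ne_zero _ (sub_inv_ne s hs0 h2)
  intro hc
  apply h
  have hm : s ^ m = (s ^ m)⁻¹ := by rw [← inv_pow]; linear_combination hc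
  have hmm : (s ^ m) * (s ^ m) = 1 := by
    nth_rewrite 2 [hm]; exact mul_inv_cancel₀ (pow_ne_zero _ hs0)
  calc (s ^ 2) ^ m = s ^ m * s ^ m := by ring
    _ = 1 := hmm

lemma qbinom_eq (s : ℂ) (m k : ℕ) (hk : k ≤ m)
    (h : ∀ i, 1 ≤ i → i ≤ m → qint s i ≠ 0) :
    qbinom s m k = qfact s m / (qfact s k * qfact s (m - k)) := by
  have hFk : qfact s k ≠ 0 := by
    apply Finset.prod_ne_zero_iff.2
    intro i hi
    exact h (i + 1) (by omega) (by simp at hi; omega)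
  have hFmk : qfact s (m - k) ≠ 0 := by
    apply Finset.prod_ne_zero_iff.2
    intro i hi
    exact h (i + 1) (by omega) (by simp at hi; omega)
  have hP := prod_desc s m k hk
  rw [qbinom, Finset.prod_div_distrib]
  show (∏ i ∈ Finset.range k, qint s (m - i)) / qfact s k = _
  field_simp
  linear_combination hP

lemma qint_key (s : ℂ) (hs0 : s ≠ 0) (h2 : s ^ 2 ≠ 1) (n l j α : ℕ) (hl : l ≤ n) (hj : j ≤ n) :
    qint s (n + l + α) * qint s (n + j + α) =
      qint s (2 * n + α) * qint s (l + j + α) + qint s (n - l) * qint s (n - j) := by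
  have hd : s - s⁻¹ ≠ 0 := sub_inv_ne s hs0 h2
  have key2 : (s ^ (n + l + α) - (s ^ (n + l + α))⁻¹) * (s ^ (n + j + α) - (s ^ (n + j + α))⁻¹) =
      (s ^ (2 * n + α) - (s ^ (2 * n + α))⁻¹) * (s ^ (l + j + α) - (s ^ (l + j + α))⁻¹) +
        (s ^ (n - l) - (s ^ (n - l))⁻¹) * (s ^ (n - j) - (s ^ (n - j))⁻¹) := by
    have e1 : s ^ (n - l) = s ^ n / s ^ l := pow_sub₀ s hs0 hl
    have e2 : s ^ (n - j) = s ^ n / s ^ j := pow_sub₀ s hs0 hj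
    rw [e1, e2]
    have hn : s ^ n ≠ 0 := pow_ne_zero _ hs0
    have hll : s ^ l ≠ 0 := pow_ne_zero _ hs0
    have hjj : s ^ j ≠ 0 := pow_ne_zero _ hs0
    field_simp
    ring
  simp only [qint, inv_pow]
  rw [div_mul_div_comm, div_mul_div_comm, div_mul_div_comm, ← add_div, key2]

set_option maxHeartbeats 2000000 in
theorem telescoping_identity (s : ℂ) (hs0 : s ≠ 0) (n l j α : ℕ)
    (hl : l ≤ n) (hj : j ≤ n) (hα : 1 ≤ α)
    (hroot : ∀ m : ℕ, 1 ≤ m → m ≤ 2 * n + α → (s ^ 2) ^ m ≠ 1) :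
    (-1 : ℂ) ^ (l + j) * (qint s (l + j + α) / qint s α) *
        (qbinom s (n + l + α) (n - j) * qbinom s (n + j + α) (n - l) *
          qbinom s (l + j + α - 1) l * qbinom s (l + j + α - 1) j) =
    ∑ k ∈ Finset.Icc (max l j) n,
      (-1 : ℂ) ^ (l + j) * (qint s (2 * k + α) / qint s α) *
        (qbinom s k l * qbinom s k j *
          qbinom s (k + l + α - 1) k * qbinom s (k + j + α - 1) k) := by
  have h2 : s ^ 2 ≠ 1 := by
    have := hroot 1 le_rfl (by omega)
    simpa using this
  have hq : ∀ m : ℕ, 1 ≤ m → m ≤ 2 * n + α → qint s m ≠ 0 := fun m h1 hm =>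
    qint_ne s hs0 h2 m (hroot m h1 hm)
  have hqle : ∀ m, m ≤ 2 * n + α → ∀ i, 1 ≤ i → i ≤ m → qint s i ≠ 0 := fun m hm i h1 hi =>
    hq i h1 (le_trans hi hm)
  have hFle : ∀ m, m ≤ 2 * n + α → qfact s m ≠ 0 := by
    intro m hm
    apply Finset.prod_ne_zero_iff.2
    intro i hi
    simp only [Finset.mem_range] at hi
    exact hq (i + 1) (by omega) (by omega)
  have main : ∀ L J : ℕ, J ≤ L → L ≤ n →
      (-1 : ℂ) ^ (L + J) * (qint s (L + J + α) / qint s α) *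
          (qbinom s (n + L + α) (n - J) * qbinom s (n + J + α) (n - L) *
            qbinom s (L + J + α - 1) L * qbinom s (L + J + α - 1) J) =
      ∑ k ∈ Finset.Icc (max L J) n,
        (-1 : ℂ) ^ (L + J) * (qint s (2 * k + α) / qint s α) *
          (qbinom s k L * qbinom s k J *
            qbinom s (k + L + α - 1) k * qbinom s (k + J + α - 1) k) := by
    intro L J hJL hLn
    rw [Nat.max_eq_left hJL]
    have step : ∀ N : ℕ, L ≤ N → N ≤ n →
        (-1 : ℂ) ^ (L + J) * (qint s (L + J + α) / qint s α) *
            (qbinom s (N + L + α) (N - J) * qbinom s (N + J + α) (N - L) *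
              qbinom s (L + J + α - 1) L * qbinom s (L + J + α - 1) J) =
        ∑ k ∈ Finset.Icc L N,
          (-1 : ℂ) ^ (L + J) * (qint s (2 * k + α) / qint s α) *
            (qbinom s k L * qbinom s k J *
              qbinom s (k + L + α - 1) k * qbinom s (k + J + α - 1) k) := by
      intro N hLN
      induction N, hLN using Nat.le_induction with
      | base =>
        intro hLn'
        rw [Finset.Icc_self, Finset.sum_singleton]
        rw [Nat.sub_self, qbinom_zero]
        rw [qbinom_eq s (L + L + α) (L - J) (by omega) (hqle _ (by omega)),
          qbinom_eq s (L + J + α - 1) L (by omega) (hqle _ (by omega)),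
          qbinom_eq s (L + J + α - 1) J (by omega) (hqle _ (by omega)),
          qbinom_eq s L L le_rfl (hqle _ (by omega)),
          qbinom_eq s L J hJL (hqle _ (by omega)),
          qbinom_eq s (L + L + α - 1) L (by omega) (hqle _ (by omega))]
        rw [show L + L + α - (L - J) = L + J + α from by omega,
          show L + J + α - 1 - L = J + α - 1 from by omega,
          show L + J + α - 1 - J = L + α - 1 from by omega,
          show L + L + α - 1 - L = L + α - 1 from by omega,
          Nat.sub_self, qfact_zero]
        have r1 := qfact_succ s (L + J + α - 1)
        rw [show L + J + α - 1 + 1 = L + J + α from by omega] at r1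
        have r2 := qfact_succ s (L + L + α - 1)
        rw [show L + L + α - 1 + 1 = L + L + α from by omega] at r2
        rw [show 2 * L + α = L + L + α from by omega, r1, r2]
        have n1 : qint s α ≠ 0 := hq α hα (by omega)
        have n2 : qint s (L + J + α) ≠ 0 := hq _ (by omega) (by omega)
        have n3 : qint s (L + L + α) ≠ 0 := hq _ (by omega) (by omega)
        have n4 : qfact s (L - J) ≠ 0 := hFle _ (by omega)
        have n5 : qfact s L ≠ 0 := hFle _ (by omega)
        have n6 : qfact s J ≠ 0 := hFle _ (by omega)
        have n7 : qfact s (J + α - 1) ≠ 0 := hFle _ (by omega)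
        have n8 : qfact s (L + α - 1) ≠ 0 := hFle _ (by omega)
        have n9 : qfact s (L + J + α - 1) ≠ 0 := hFle _ (by omega)
        have n10 : qfact s (L + L + α - 1) ≠ 0 := hFle _ (by omega)
        simp only [div_mul_eq_mul_div, mul_div_assoc', div_div, mul_one, one_mul,
          div_mul_div_comm]
        rw [div_eq_div_iff (by simp [mul_eq_zero, n1, n2, n3, n4, n5, n6, n7, n8, n9, n10])
          (by simp [mul_eq_zero, n1, n2, n3, n4, n5, n6, n7, n8, n9, n10])]
        ring
      | succ N hN ih =>
        intro hN1
        rw [Finset.sum_Icc_succ_top (by omega : L ≤ N + 1), ← ih (by omega)]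
        rw [show N + 1 + L + α - 1 = N + L + α from by omega,
          show N + 1 + J + α - 1 = N + J + α from by omega]
        rw [qbinom_eq s (N + 1 + L + α) (N + 1 - J) (by omega) (hqle _ (by omega)),
          qbinom_eq s (N + 1 + J + α) (N + 1 - L) (by omega) (hqle _ (by omega)),
          qbinom_eq s (L + J + α - 1) L (by omega) (hqle _ (by omega)),
          qbinom_eq s (L + J + α - 1) J (by omega) (hqle _ (by omega)),
          qbinom_eq s (N + L + α) (N - J) (by omega) (hqle _ (by omega)),
          qbinom_eq s (N + J + α) (N - L) (by omega) (hqle _ (by omega)),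
          qbinom_eq s (N + 1) L (by omega) (hqle _ (by omega)),
          qbinom_eq s (N + 1) J (by omega) (hqle _ (by omega)),
          qbinom_eq s (N + L + α) (N + 1) (by omega) (hqle _ (by omega)),
          qbinom_eq s (N + J + α) (N + 1) (by omega) (hqle _ (by omega))]
        rw [show N + 1 + L + α - (N + 1 - J) = L + J + α from by omega,
          show N + 1 + J + α - (N + 1 - L) = L + J + α from by omega,
          show L + J + α - 1 - L = J + α - 1 from by omega,
          show L + J + α - 1 - J = L + α - 1 from by omega,
          show N + L + α - (N - J) = L + J + α from by omega,
          show N + J + α - (N - L) = L + J + α from by omega,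
          show N + L + α - (N + 1) = L + α - 1 from by omega,
          show N + J + α - (N + 1) = J + α - 1 from by omega]
        have rA := qfact_succ s (N + L + α)
        rw [show N + L + α + 1 = N + 1 + L + α from by omega] at rA
        have rB := qfact_succ s (N + J + α)
        rw [show N + J + α + 1 = N + 1 + J + α from by omega] at rB
        have rP := qfact_succ s (N - J)
        rw [show N - J + 1 = N + 1 - J from by omega] at rP
        have rQ := qfact_succ s (N - L)
        rw [show N - L + 1 = N + 1 - L from by omega] at rQ
        have r1 := qfact_succ s (L + J + α - 1)
        rw [show L + J + α - 1 + 1 = L + J + α from by omega] at r1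
        rw [rA, rB, rP, rQ, r1]
        have hkey := qint_key s hs0 h2 (N + 1) L J α (by omega) (by omega)
        have nb : qint s (N + 1 + J + α) ≠ 0 := hq _ (by omega) (by omega)
        have ha : qint s (N + 1 + L + α) =
            (qint s (2 * (N + 1) + α) * qint s (L + J + α) +
              qint s (N + 1 - L) * qint s (N + 1 - J)) / qint s (N + 1 + J + α) := by
          field_simp [nb]
          linear_combination hkey
        rw [ha]
        have n1 : qint s α ≠ 0 := hq α hα (by omega)
        have n2 : qint s (L + J + α) ≠ 0 := hq _ (by omega) (by omega)
        have n3 : qint s (N + 1 - J) ≠ 0 := hq _ (by omega) (by omega)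
        have n4 : qint s (N + 1 - L) ≠ 0 := hq _ (by omega) (by omega)
        have n5 : qfact s (N - J) ≠ 0 := hFle _ (by omega)
        have n6 : qfact s (N - L) ≠ 0 := hFle _ (by omega)
        have n7 : qfact s L ≠ 0 := hFle _ (by omega)
        have n8 : qfact s J ≠ 0 := hFle _ (by omega)
        have n9 : qfact s (J + α - 1) ≠ 0 := hFle _ (by omega)
        have n10 : qfact s (L + α - 1) ≠ 0 := hFle _ (by omega)
        have n11 : qfact s (L + J + α - 1) ≠ 0 := hFle _ (by omega)
        have n12 : qfact s (N + 1) ≠ 0 := hFle _ (by omega)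
        have n13 : qfact s (N + L + α) ≠ 0 := hFle _ (by omega)
        have n14 : qfact s (N + J + α) ≠ 0 := hFle _ (by omega)
        simp only [div_mul_eq_mul_div, mul_div_assoc', div_div, mul_one, one_mul,
          div_mul_div_comm]
        rw [div_add_div _ _
            (by simp [mul_eq_zero, nb, n1, n2, n3, n4, n5, n6, n7, n8, n9, n10, n11, n12, n13, n14])
            (by simp [mul_eq_zero, nb, n1, n2, n3, n4, n5, n6, n7, n8, n9, n10, n11, n12, n13, n14]),
          div_eq_div_iff
            (by simp [mul_eq_zero, nb, n1, n2, n3, n4, n5, n6, n7, n8, n9, n10, n11, n12, n13, n14])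
            (by simp [mul_eq_zero, nb, n1, n2, n3, n4, n5, n6, n7, n8, n9, n10, n11, n12, n13, n14])]
        ring
    exact step n hLn le_rfl
  rcases le_total j l with h | h
  · exact main l j h hl
  · rw [Nat.add_comm l j, max_comm l j]
    have h' := main j l h hj
    refine Eq.trans (by ring) (h'.trans ?_)
    exact Finset.sum_congr rfl fun k _ => by ring
end

section
/- The determinant of the generalized quantum Hilbert matrix satisfies det H_n^{(α)}(q) = [α]_q^n (∏_{k=1}^n [2k+α]_q (2k+α−1 choose k)_q^2)^{-1}. -/
open Finset Matrix Polynomial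

section helpers

lemma det_cauchy {n : ℕ} (x y : Fin n → ℂ) (hy : Function.Injective y)
    (hxy : ∀ i j, x i - y j ≠ 0) :
    (Matrix.of fun i j => (x i - y j)⁻¹).det =
      (vandermonde x).det * (∏ j, ∏ k ∈ Finset.univ.erase j, (y j - y k)) /
        ((vandermonde y).det * ∏ i, ∏ j, (x i - y j)) := by
  classical
  set E : Matrix (Fin n) (Fin n) ℂ :=
    Matrix.of fun m j => (∏ k ∈ Finset.univ.erase j, (X - C (y k))).coeff m with hE
  have hdeg : ∀ j : Fin n, (∏ k ∈ Finset.univ.erase j, (X - C (y k))).natDegree < n := by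
    intro j
    calc (∏ k ∈ Finset.univ.erase j, (X - C (y k))).natDegree
        ≤ ∑ k ∈ Finset.univ.erase j, (X - C (y k)).natDegree := Polynomial.natDegree_prod_le _ _
      _ = ∑ k ∈ Finset.univ.erase j, 1 := by
          apply Finset.sum_congr rfl; intro k _; exact Polynomial.natDegree_X_sub_C _
      _ = (Finset.univ.erase j).card := by simp
      _ < n := by
          rw [Finset.card_erase_of_mem (Finset.mem_univ j), Finset.card_univ, Fintype.card_fin]
          have : 0 < n := j.pos
          omega
  have heval : ∀ (v : Fin n → ℂ) (i j : Fin n),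
      (vandermonde v * E) i j = ∏ k ∈ Finset.univ.erase j, (v i - y k) := by
    intro v i j
    rw [Matrix.mul_apply]
    have : ∏ k ∈ Finset.univ.erase j, (v i - y k)
        = (∏ k ∈ Finset.univ.erase j, (X - C (y k))).eval (v i) := by
      simp [Polynomial.eval_prod]
    rw [this, Polynomial.eval_eq_sum_range' (hdeg j), ← Fin.sum_univ_eq_sum_range]
    apply Finset.sum_congr rfl
    intro m _
    simp [vandermonde, hE, mul_comm]
  have h1 : vandermonde x * E
      = Matrix.diagonal (fun i => ∏ j, (x i - y j)) * Matrix.of fun i j => (x i - y j)⁻¹ := by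
    ext i j
    rw [heval, Matrix.diagonal_mul]
    rw [← Finset.prod_erase_mul Finset.univ _ (Finset.mem_univ j)]
    rw [Matrix.of_apply, mul_assoc, mul_inv_cancel₀ (hxy i j), mul_one]
  have h2 : vandermonde y * E
      = Matrix.diagonal (fun j => ∏ k ∈ Finset.univ.erase j, (y j - y k)) := by
    ext i j
    rw [heval]
    rcases eq_or_ne i j with rfl | hij
    · simp
    · rw [Matrix.diagonal_apply_ne _ hij]
      apply Finset.prod_eq_zero (Finset.mem_erase.mpr ⟨hij, Finset.mem_univ i⟩)
      ring
  have hVy : (vandermonde y).det ≠ 0 := (Matrix.det_vandermonde_ne_zero_iff).mpr hy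
  have hr : (∏ i, ∏ j, (x i - y j)) ≠ 0 := by
    rw [Finset.prod_ne_zero_iff]; intro i _
    rw [Finset.prod_ne_zero_iff]; intro j _
    exact hxy i j
  have d1 := congrArg Matrix.det h1
  have d2 := congrArg Matrix.det h2
  rw [Matrix.det_mul, Matrix.det_mul, Matrix.det_diagonal] at d1
  rw [Matrix.det_mul, Matrix.det_diagonal] at d2
  have hdetE : E.det = (∏ j, ∏ k ∈ Finset.univ.erase j, (y j - y k)) / (vandermonde y).det := by
    rw [eq_div_iff hVy]; linear_combination d2
  have hC : (Matrix.of fun i j => (x i - y j)⁻¹).det = (vandermonde x).det * E.det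
      / (∏ i, ∏ j, (x i - y j)) := by
    rw [eq_div_iff hr]; linear_combination -d1
  rw [hC, hdetE]
  field_simp

lemma lemA (s : ℂ) (α : ℕ) : ∀ n : ℕ, (∀ m : ℕ, 1 ≤ m → m ≤ 2*n+α → qint s m ≠ 0) →
    ∏ l ∈ range (n+1), ∏ j ∈ range (n+1), qint s (l+j+α)
      = (qint s α * ∏ k ∈ Icc 1 n, (qint s (2*k+α) * qbinom s (2*k+α-1) k ^ 2))
        * ∏ l' ∈ range (n+1), ∏ l ∈ range l', qint s (l'-l) ^ 2 := by
  intro n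
  induction n with
  | zero => intro _; simp
  | succ n ih =>
    intro hq
    have hq' : ∀ m, 1 ≤ m → m ≤ 2*n+α → qint s m ≠ 0 := fun m h1 h2 => hq m h1 (by omega)
    set Q := ∏ j ∈ range (n+1), qint s (n+1+j+α) with hQ
    set B1 := ∏ j ∈ range (n+1), qint s (n+1-j) with hB1
    have hB1ne : B1 ≠ 0 := by
      rw [hB1, Finset.prod_ne_zero_iff]
      intro j hj
      rw [Finset.mem_range] at hj
      exact hq _ (by omega) (by omega)
    have hL : ∏ l ∈ range (n+2), ∏ j ∈ range (n+2), qint s (l+j+α)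
        = (∏ l ∈ range (n+1), ∏ j ∈ range (n+1), qint s (l+j+α))
          * (Q * (Q * qint s (2*(n+1)+α))) := by
      rw [Finset.prod_range_succ]
      have inner : ∀ l, ∏ j ∈ range (n+2), qint s (l+j+α)
          = (∏ j ∈ range (n+1), qint s (l+j+α)) * qint s (l+(n+1)+α) :=
        fun l => Finset.prod_range_succ _ _
      rw [Finset.prod_congr rfl (fun l _ => inner l), Finset.prod_mul_distrib, inner]
      have e1 : ∏ l ∈ range (n+1), qint s (l+(n+1)+α) = Q := by
        apply Finset.prod_congr rfl
        intro l _
        rw [show l+(n+1)+α = n+1+l+α by omega]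
      have e2 : ∏ j ∈ range (n+1), qint s (n+1+j+α) = Q := rfl
      rw [e1, e2, show n+1+(n+1)+α = 2*(n+1)+α by omega]
      ring
    have hQb : qbinom s (2*(n+1)+α-1) (n+1) = Q / B1 := by
      rw [qbinom, Finset.prod_div_distrib]
      congr 1
      · rw [hQ, ← Finset.prod_range_reflect (fun j => qint s (n+1+j+α)) (n+1)]
        apply Finset.prod_congr rfl
        intro j hj
        rw [Finset.mem_range] at hj
        congr 1
        omega
      · rw [hB1, ← Finset.prod_range_reflect (fun j => qint s (j+1)) (n+1)]
        apply Finset.prod_congr rfl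
        intro j hj
        rw [Finset.mem_range] at hj
        congr 1
        omega
    rw [hL, ih hq', Finset.prod_Icc_succ_top (by omega : 1 ≤ n+1), hQb,
      Finset.prod_range_succ _ (n+1)]
    have hB1sq : ∏ l ∈ range (n+1), qint s ((n+1)-l)^2 = B1^2 := by
      rw [hB1, ← Finset.prod_pow]
    rw [hB1sq]
    field_simp

lemma qint_mul {s : ℂ} (hss : s - s⁻¹ ≠ 0) (m : ℕ) :
    (s - s⁻¹) * qint s m = s ^ m - (s ^ m)⁻¹ := by
  rw [qint, mul_div_cancel₀ _ hss, inv_pow]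

variable {s : ℂ} (hs0 : s ≠ 0) (hss : s - s⁻¹ ≠ 0)
include hs0 hss

lemma L1 (a b : ℕ) :
    (s^2)^(a+b) - (s^2)^a = s^(a+(a+b)) * ((s - s⁻¹) * qint s b) := by
  rw [qint_mul hss]
  field_simp
  ring

lemma L2 (a b α : ℕ) :
    ((s^2)^(a+α))⁻¹ - ((s^2)^((a+b)+α))⁻¹
      = (s^(a+(a+b)+2*α))⁻¹ * ((s - s⁻¹) * qint s b) := by
  rw [qint_mul hss]
  field_simp
  ring

lemma L3 (a b α : ℕ) :
    (s^2)^a - ((s^2)^(b+α))⁻¹ = s^a * (s^(b+α))⁻¹ * ((s - s⁻¹) * qint s (a+b+α)) := by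
  rw [qint_mul hss]
  field_simp
  ring

end helpers

lemma scalar_cancel (S u t qa W RW VY : ℂ) (hS : S ≠ 0) (hu : u ≠ 0) (ht : t ≠ 0)
    (hVY : VY ≠ 0) (hRW : RW ≠ 0) (N1 N : ℕ) (hNN : N1 * N1 = N1 + 2*N) :
    S * ((VY * (((u⁻¹*t)^2)^N * W)) / (VY * (S^N1 * ((S*u^N1)⁻¹)^N1 * (t^N1)^N1 * RW))
        * ((qa*t)^N1 * (S*u^N1)⁻¹))
      = qa^N1 * W / RW := by
  rw [← mul_assoc]
  rw [← pow_mul t, hNN, pow_add t, pow_mul t]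
  field_simp
  rw [div_pow, one_div, inv_pow, mul_pow S (u^N1) N1, ← pow_mul u N1 N1, hNN, pow_add u]
  field_simp
  ring

lemma prod_Iio_fin (m : ℕ) (b : Fin m) (h : ℕ → ℂ) :
    ∏ i ∈ Finset.Iio b, h (i : ℕ) = ∏ i ∈ Finset.range (b : ℕ), h i := by
  rw [← Nat.Iio_eq_range, ← Fin.map_valEmbedding_Iio, Finset.prod_map]
  rfl

lemma finpp (m : ℕ) (f : ℕ → ℕ → ℂ) :
    ∏ i : Fin m, ∏ j ∈ Finset.Ioi i, f (i : ℕ) (j : ℕ)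
      = ∏ j ∈ Finset.range m, ∏ i ∈ Finset.range j, f i j := by
  rw [Finset.prod_comm' (t' := Finset.univ) (s' := fun j => Finset.Iio j)
    (by intro i j; simp only [Finset.mem_univ, true_and, and_true, Finset.mem_Ioi,
      Finset.mem_Iio])]
  rw [← Fin.prod_univ_eq_prod_range (fun j => ∏ i ∈ Finset.range j, f i j) m]
  apply Finset.prod_congr rfl
  intro j _
  rw [← prod_Iio_fin m j (fun i => f i (j : ℕ))]

lemma prod_erase_pairs (m : ℕ) (g : Fin m → Fin m → ℂ) :
    ∏ j, ∏ k ∈ Finset.univ.erase j, g j k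
      = ∏ i, ∏ j ∈ Finset.Ioi i, (g j i * g i j) := by
  have hsplit : ∀ j : Fin m, Finset.univ.erase j = Finset.Iio j ∪ Finset.Ioi j := by
    intro j; ext k
    simp only [Finset.mem_erase, Finset.mem_univ, and_true, Finset.mem_union,
      Finset.mem_Iio, Finset.mem_Ioi]
    exact ne_iff_lt_or_gt
  have hdisj : ∀ j : Fin m, Disjoint (Finset.Iio j) (Finset.Ioi j) := by
    intro j
    rw [Finset.disjoint_left]
    intro k hk hk'
    simp only [Finset.mem_Iio] at hk
    simp only [Finset.mem_Ioi] at hk'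
    exact absurd (hk.trans hk') (lt_irrefl k)
  calc ∏ j, ∏ k ∈ Finset.univ.erase j, g j k
      = ∏ j, ((∏ k ∈ Finset.Iio j, g j k) * ∏ k ∈ Finset.Ioi j, g j k) := by
        apply Finset.prod_congr rfl; intro j _
        rw [hsplit j, Finset.prod_union (hdisj j)]
    _ = (∏ j, ∏ k ∈ Finset.Iio j, g j k) * ∏ j, ∏ k ∈ Finset.Ioi j, g j k :=
        Finset.prod_mul_distrib
    _ = (∏ i, ∏ j ∈ Finset.Ioi i, g j i) * ∏ i, ∏ j ∈ Finset.Ioi i, g i j := by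
        congr 1
        exact Finset.prod_comm' (by intro x y; simp)
    _ = ∏ i, ∏ j ∈ Finset.Ioi i, (g j i * g i j) := by
        rw [← Finset.prod_mul_distrib]
        apply Finset.prod_congr rfl; intro i _
        rw [← Finset.prod_mul_distrib]

theorem det_quantum_Hilbert (s : ℂ) (hs0 : s ≠ 0) (n α : ℕ) (hα : 1 ≤ α)
    (hroot : ∀ m : ℕ, 1 ≤ m → m ≤ 2 * n + α → (s ^ 2) ^ m ≠ 1)
    (H : Matrix (Fin (n + 1)) (Fin (n + 1)) ℂ)
    (hH : ∀ l j : Fin (n + 1), H l j = qint s α / qint s ((l : ℕ) + (j : ℕ) + α)) :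
    H.det = qint s α ^ n *
      (∏ k ∈ Finset.Icc 1 n, qint s (2 * k + α) * qbinom s (2 * k + α - 1) k ^ 2)⁻¹ := by
  have hs2 : (s^2 : ℂ) ≠ 0 := pow_ne_zero _ hs0
  have hss : s - s⁻¹ ≠ 0 := by
    intro h
    apply hroot 1 le_rfl (by omega)
    rw [pow_one, sub_eq_zero] at *
    rw [sq]
    nth_rewrite 2 [h]
    exact mul_inv_cancel₀ hs0
  have hq : ∀ m, 1 ≤ m → m ≤ 2*n+α → qint s m ≠ 0 := by
    intro m h1 h2
    rw [qint]
    apply div_ne_zero _ hss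
    intro h
    apply hroot m h1 h2
    rw [sub_eq_zero] at h
    calc (s^2)^m = s^m * s^m := by rw [← pow_mul, two_mul, pow_add]
      _ = s^m * s⁻¹^m := by rw [← h]
      _ = 1 := by rw [inv_pow, mul_inv_cancel₀ (pow_ne_zero _ hs0)]
  have hcanc : ∀ a b : ℕ, a < b → b ≤ 2*n+α → (s^2)^a ≠ (s^2)^b := by
    intro a b hab hb h
    apply hroot (b-a) (by omega) (by omega)
    have h2 : (s^2)^a * (s^2)^(b-a) = (s^2)^a * 1 := by
      rw [mul_one, ← pow_add, show a + (b-a) = b by omega]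
      exact h.symm
    exact mul_left_cancel₀ (pow_ne_zero _ hs2) h2
  have hyinj : Function.Injective (fun j : Fin (n+1) => ((s^2)^((j:ℕ)+α))⁻¹) := by
    intro a b hab
    simp only at hab
    have hab2 : (s^2)^((a:ℕ)+α) = (s^2)^((b:ℕ)+α) := inv_injective hab
    by_contra hne
    have ha := a.is_le
    have hb := b.is_le
    rcases lt_trichotomy ((a:ℕ)+α) ((b:ℕ)+α) with hlt | heq | hgt
    · exact hcanc _ _ hlt (by omega) hab2
    · exact hne (Fin.ext (by omega))
    · exact hcanc _ _ hgt (by omega) hab2.symm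
  have hxy : ∀ l j : Fin (n+1),
      (fun l : Fin (n+1) => (s^2)^(l:ℕ)) l - (fun j : Fin (n+1) => ((s^2)^((j:ℕ)+α))⁻¹) j ≠ 0 := by
    intro l j h
    simp only [sub_eq_zero] at h
    apply hroot ((l:ℕ)+(j:ℕ)+α) (by omega) (by have := l.is_le; have := j.is_le; omega)
    rw [show (l:ℕ)+(j:ℕ)+α = (l:ℕ)+((j:ℕ)+α) by omega, pow_add, h]
    exact inv_mul_cancel₀ (pow_ne_zero _ hs2)
  have hqα : qint s α ≠ 0 := hq α hα (by omega)
  -- matrix factorization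
  have hHfact : H = Matrix.diagonal (fun l : Fin (n+1) => s^(l:ℕ)) *
      ((Matrix.of fun l j : Fin (n+1) =>
          ((fun l : Fin (n+1) => (s^2)^(l:ℕ)) l - (fun j : Fin (n+1) => ((s^2)^((j:ℕ)+α))⁻¹) j)⁻¹) *
        Matrix.diagonal (fun j : Fin (n+1) => qint s α * (s - s⁻¹) * (s^((j:ℕ)+α))⁻¹)) := by
    ext l j
    rw [Matrix.diagonal_mul, Matrix.mul_diagonal, Matrix.of_apply, hH]
    simp only
    have hd := hq ((l:ℕ)+(j:ℕ)+α) (by omega) (by have := l.is_le; have := j.is_le; omega)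
    rw [L3 hs0 hss (l:ℕ) (j:ℕ) α]
    obtain ⟨t, ht, hts⟩ : ∃ t : ℂ, t ≠ 0 ∧ s - s⁻¹ = t := ⟨s - s⁻¹, hss, rfl⟩
    rw [hts]
    field_simp
  have hC := det_cauchy (fun l : Fin (n+1) => (s^2)^(l:ℕ))
      (fun j : Fin (n+1) => ((s^2)^((j:ℕ)+α))⁻¹) hyinj hxy
  rw [hHfact, Matrix.det_mul, Matrix.det_mul, Matrix.det_diagonal, Matrix.det_diagonal, hC]
  set S := ∏ l : Fin (n+1), s^(l:ℕ) with hSdef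
  set W := ∏ i : Fin (n+1), ∏ j ∈ Finset.Ioi i, qint s ((j:ℕ)-(i:ℕ))^2 with hWdef
  set RW := ∏ l : Fin (n+1), ∏ j : Fin (n+1), qint s ((l:ℕ)+(j:ℕ)+α) with hRWdef
  set N := ∑ i : Fin (n+1), (Finset.Ioi i).card with hNdef
  have hSne : S ≠ 0 := Finset.prod_ne_zero_iff.mpr (fun i _ => pow_ne_zero _ hs0)
  have hWne : W ≠ 0 := by
    rw [hWdef, Finset.prod_ne_zero_iff]
    intro i _
    rw [Finset.prod_ne_zero_iff]
    intro j hj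
    have hij0 : i < j := Finset.mem_Ioi.mp hj
    have hij : (i:ℕ) < (j:ℕ) := hij0
    have := j.is_le
    exact pow_ne_zero _ (hq _ (by omega) (by omega))
  have hRWne : RW ≠ 0 := by
    rw [hRWdef, Finset.prod_ne_zero_iff]
    intro i _
    rw [Finset.prod_ne_zero_iff]
    intro j _
    have := i.is_le
    have := j.is_le
    exact hq _ (by omega) (by omega)
  have hNN : (n+1) * (n+1) = (n+1) + 2*N := by
    have hcard : ∀ i : Fin (n+1), #(Finset.Ioi i) = n - (i:ℕ) := by
      intro i; rw [Fin.card_Ioi]; omega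
    have hN1 : N = ∑ i ∈ range (n+1), (n - i) := by
      rw [hNdef, Finset.sum_congr rfl (fun i _ => hcard i),
        Fin.sum_univ_eq_sum_range (fun i => n - i)]
    have hN2 : N = ∑ i ∈ range (n+1), i := by
      rw [hN1, ← Finset.sum_range_reflect (fun j => j) (n+1)]
      apply Finset.sum_congr rfl
      intro i hi
      rw [Finset.mem_range] at hi
      omega
    have h2N : 2 * N = (n+1) * n := by
      have : 2 * N = ∑ i ∈ range (n+1), ((n - i) + i) := by
        rw [Finset.sum_add_distrib, ← hN1, ← hN2]; ring
      rw [this, Finset.sum_congr rfl (fun i hi => by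
        rw [Finset.mem_range] at hi; omega : ∀ i ∈ range (n+1), n - i + i = n)]
      rw [Finset.sum_const, Finset.card_range, smul_eq_mul]
    rw [h2N]; ring
  have key : ∀ i j : Fin (n+1), i < j →
      ((s^2)^(j:ℕ) - (s^2)^(i:ℕ)) * (((s^2)^((i:ℕ)+α))⁻¹ - ((s^2)^((j:ℕ)+α))⁻¹)
        = ((s^α)⁻¹*(s-s⁻¹))^2 * qint s ((j:ℕ)-(i:ℕ))^2 := by
    intro i j hij
    have hij' : (i:ℕ) < (j:ℕ) := hij
    obtain ⟨d, hd⟩ : ∃ d, (j:ℕ) = (i:ℕ) + d := ⟨(j:ℕ)-(i:ℕ), by omega⟩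
    rw [hd, show (i:ℕ) + d - (i:ℕ) = d by omega]
    rw [L1 hs0 hss (i:ℕ) d, L2 hs0 hss (i:ℕ) d α]
    obtain ⟨t, ht, hts⟩ : ∃ t : ℂ, t ≠ 0 ∧ s - s⁻¹ = t := ⟨s - s⁻¹, hss, rfl⟩
    rw [hts]
    field_simp
    ring
  have merge : ∀ (F G : Fin (n+1) → Fin (n+1) → ℂ),
      (∏ i, ∏ j ∈ Finset.Ioi i, F i j) * (∏ i, ∏ j ∈ Finset.Ioi i, G i j)
        = ∏ i, ∏ j ∈ Finset.Ioi i, (F i j * G i j) := by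
    intro F G
    rw [← Finset.prod_mul_distrib]
    exact Finset.prod_congr rfl fun i _ => Finset.prod_mul_distrib.symm
  have hYprod : ∏ j : Fin (n+1), (s^((j:ℕ)+α))⁻¹ = (S * (s^α)^(n+1))⁻¹ := by
    rw [Finset.prod_inv_distrib]
    congr 1
    calc ∏ j : Fin (n+1), s^((j:ℕ)+α) = ∏ j : Fin (n+1), (s^(j:ℕ) * s^α) := by
          apply Finset.prod_congr rfl; intro j _; rw [pow_add]
      _ = S * (s^α)^(n+1) := by
          rw [Finset.prod_mul_distrib, Finset.prod_const, Finset.card_univ, Fintype.card_fin,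
            hSdef]
  have hVD : (vandermonde (fun l : Fin (n+1) => (s^2)^(l:ℕ))).det
      * (∏ x : Fin (n+1), ∏ x_1 ∈ Finset.univ.erase x,
          (((s^2)^((x:ℕ)+α))⁻¹ - ((s^2)^((x_1:ℕ)+α))⁻¹))
      = (vandermonde (fun j : Fin (n+1) => ((s^2)^((j:ℕ)+α))⁻¹)).det
        * ((((s^α)⁻¹*(s-s⁻¹))^2)^N * W) := by
    rw [Matrix.det_vandermonde, Matrix.det_vandermonde,
      prod_erase_pairs (n+1) (fun a b : Fin (n+1) => ((s^2)^((a:ℕ)+α))⁻¹ - ((s^2)^((b:ℕ)+α))⁻¹)]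
    rw [merge]
    have step : ∀ i : Fin (n+1), ∀ j ∈ Finset.Ioi i,
        ((s^2)^(j:ℕ) - (s^2)^(i:ℕ))
          * ((((s^2)^((j:ℕ)+α))⁻¹ - ((s^2)^((i:ℕ)+α))⁻¹)
            * (((s^2)^((i:ℕ)+α))⁻¹ - ((s^2)^((j:ℕ)+α))⁻¹))
          = (((s^2)^((j:ℕ)+α))⁻¹ - ((s^2)^((i:ℕ)+α))⁻¹)
            * (((s^α)⁻¹*(s-s⁻¹))^2 * qint s ((j:ℕ)-(i:ℕ))^2) := by
      intro i j hj
      have hij : i < j := Finset.mem_Ioi.mp hj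
      rw [← key i j hij]
      ring
    rw [Finset.prod_congr rfl (fun i _ => Finset.prod_congr rfl (step i))]
    rw [← merge, ← merge]
    congr 1
    rw [Finset.prod_congr rfl (fun i (_ : i ∈ Finset.univ) =>
      Finset.prod_const (b := ((s^α)⁻¹*(s-s⁻¹))^2) (s := Finset.Ioi i)),
      Finset.prod_pow_eq_pow_sum, hNdef]
  have hE2 : ∏ j : Fin (n+1), (qint s α * (s - s⁻¹) * (s^((j:ℕ)+α))⁻¹)
      = (qint s α * (s-s⁻¹))^(n+1) * (S * (s^α)^(n+1))⁻¹ := by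
    rw [Finset.prod_mul_distrib, Finset.prod_const, Finset.card_univ, Fintype.card_fin, hYprod]
  have hR : (∏ x : Fin (n+1), ∏ x_1 : Fin (n+1), ((s^2)^(x:ℕ) - ((s^2)^((x_1:ℕ)+α))⁻¹))
      = S^(n+1) * ((S * (s^α)^(n+1))⁻¹)^(n+1) * ((s-s⁻¹)^(n+1))^(n+1) * RW := by
    have inner : ∀ x : Fin (n+1), ∏ x_1 : Fin (n+1), ((s^2)^(x:ℕ) - ((s^2)^((x_1:ℕ)+α))⁻¹)
        = (s^(x:ℕ))^(n+1) * (S * (s^α)^(n+1))⁻¹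
          * ((s-s⁻¹)^(n+1) * ∏ x_1 : Fin (n+1), qint s ((x:ℕ)+(x_1:ℕ)+α)) := by
      intro x
      have e : ∏ x_1 : Fin (n+1), ((s^2)^(x:ℕ) - ((s^2)^((x_1:ℕ)+α))⁻¹)
          = ∏ x_1 : Fin (n+1), (s^(x:ℕ) * (s^((x_1:ℕ)+α))⁻¹
              * ((s - s⁻¹) * qint s ((x:ℕ)+(x_1:ℕ)+α))) :=
        Finset.prod_congr rfl (fun j _ => L3 hs0 hss (x:ℕ) (j:ℕ) α)
      rw [e]
      rw [Finset.prod_mul_distrib, Finset.prod_mul_distrib, Finset.prod_const,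
        Finset.card_univ, Fintype.card_fin, hYprod, Finset.prod_mul_distrib,
        Finset.prod_const, Finset.card_univ, Fintype.card_fin]
    rw [Finset.prod_congr rfl (fun x (_ : x ∈ Finset.univ) => inner x)]
    rw [Finset.prod_mul_distrib, Finset.prod_mul_distrib, Finset.prod_mul_distrib,
      Finset.prod_pow, Finset.prod_const, Finset.prod_const, Finset.card_univ,
      Fintype.card_fin, ← hSdef, ← hRWdef]
    ring
  rw [hVD, hR, hE2]
  have hVy : (vandermonde (fun j : Fin (n+1) => ((s^2)^((j:ℕ)+α))⁻¹)).det ≠ 0 :=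
    Matrix.det_vandermonde_ne_zero_iff.mpr hyinj
  rw [scalar_cancel S (s^α) (s-s⁻¹) (qint s α) W RW _ hSne (pow_ne_zero _ hs0) hss hVy hRWne
    (n+1) N hNN]
  have hRWr : RW = ∏ l ∈ range (n+1), ∏ j ∈ range (n+1), qint s (l+j+α) := by
    rw [hRWdef, ← Fin.prod_univ_eq_prod_range (fun l => ∏ j ∈ range (n+1), qint s (l+j+α)) (n+1)]
    apply Finset.prod_congr rfl
    intro l _
    rw [← Fin.prod_univ_eq_prod_range (fun j => qint s ((l:ℕ)+j+α)) (n+1)]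
  have hWr : W = ∏ l' ∈ range (n+1), ∏ l ∈ range l', qint s (l'-l)^2 := by
    rw [hWdef]; exact finpp (n+1) (fun a b => qint s (b-a)^2)
  have hPne : (∏ k ∈ Finset.Icc 1 n, qint s (2*k+α) * qbinom s (2*k+α-1) k ^ 2) ≠ 0 := by
    rw [Finset.prod_ne_zero_iff]
    intro k hk
    rw [Finset.mem_Icc] at hk
    apply mul_ne_zero (hq _ (by omega) (by omega))
    apply pow_ne_zero
    rw [qbinom, Finset.prod_ne_zero_iff]
    intro j hj
    rw [Finset.mem_range] at hj
    exact div_ne_zero (hq _ (by omega) (by omega)) (hq _ (by omega) (by omega))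
  rw [hRWr, lemA s α n hq, ← hWr]
  rw [div_eq_iff (mul_ne_zero (mul_ne_zero hqα hPne) hWne)]
  field_simp [hPne]
  ring
end

section
/- The inverse of the Hilbert matrix H_n = (1/(l+j+1))_{0≤l,j≤n} has integer entries given by Choi's formula: (H_n^{-1})_{l,j} = (−1)^{l+j} (l+j+1) C(n+l+1, n−j) C(n+j+1, n−l) C(l+j, l) C(l+j, j), where C denotes the binomial coefficient. -/
open Finset Polynomial Nat

private lemma hilb_prod_shift (j : ℕ) :
    ∀ s : ℕ, (∏ m ∈ Finset.range s, (j + 1 + m)) * j ! = (s + j)!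
  | 0 => by simp
  | s + 1 => by
    rw [Finset.prod_range_succ, mul_right_comm, hilb_prod_shift j s,
      show s + 1 + j = (s + j) + 1 by ring, Nat.factorial_succ]
    ring

private lemma hilb_prod_shift_real (n j : ℕ) :
    ∏ m ∈ Finset.range (n + 1), ((j : ℝ) + 1 + m) = ((n + 1 + j)! : ℝ) / (j ! : ℝ) := by
  have h := congrArg (Nat.cast : ℕ → ℝ) (hilb_prod_shift j (n + 1))
  push_cast at h
  rw [eq_div_iff (by exact_mod_cast Nat.factorial_ne_zero j)]
  convert h using 2

private lemma hilb_prod_range_desc (j : ℕ) :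
    ∏ m ∈ Finset.range j, ((j : ℝ) - m) = (j ! : ℝ) := by
  have h := Finset.prod_range_reflect (fun m => ((j : ℝ) - m)) j
  rw [← h]
  have : ∀ m ∈ Finset.range j, ((j : ℝ) - ((j - 1 - m : ℕ) : ℝ)) = ((m + 1 : ℕ) : ℝ) := by
    intro m hm
    simp only [Finset.mem_range] at hm
    push_cast [Nat.cast_sub (by omega : m ≤ j - 1), Nat.cast_sub (by omega : 1 ≤ j)]
    ring
  rw [Finset.prod_congr rfl this, ← Nat.cast_prod, Finset.prod_range_add_one_eq_factorial]

private lemma hilb_prod_range_sub (j : ℕ) :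
    ∏ m ∈ Finset.range j, ((m : ℝ) - j) = (-1) ^ j * (j ! : ℝ) := by
  have : ∀ m ∈ Finset.range j, ((m : ℝ) - j) = (-1) * ((j : ℝ) - m) := fun m _ => by ring
  rw [Finset.prod_congr rfl this, Finset.prod_mul_distrib, hilb_prod_range_desc,
    Finset.prod_const, Finset.card_range]

private lemma hilb_prod_Ico_sub (n j : ℕ) (hj : j ≤ n) :
    ∏ m ∈ Finset.Ico (j + 1) (n + 1), ((m : ℝ) - j) = ((n - j)! : ℝ) := by
  rw [Finset.prod_Ico_eq_prod_range]
  have hc : n + 1 - (j + 1) = n - j := by omega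
  rw [hc]
  have : ∀ m ∈ Finset.range (n - j), ((j + 1 + m : ℕ) : ℝ) - j = ((m + 1 : ℕ) : ℝ) := by
    intro m _
    push_cast; ring
  rw [Finset.prod_congr rfl this, ← Nat.cast_prod, Finset.prod_range_add_one_eq_factorial]

private lemma hilb_prod_erase_sub (n j : ℕ) (hj : j ≤ n) :
    ∏ m ∈ (Finset.range (n + 1)).erase j, ((m : ℝ) - j) =
      (-1) ^ j * (j ! : ℝ) * ((n - j)! : ℝ) := by
  have hsplit : (Finset.range (n + 1)).erase j =
      Finset.range j ∪ Finset.Ico (j + 1) (n + 1) := by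
    ext m
    simp only [Finset.mem_erase, Finset.mem_range, Finset.mem_union, Finset.mem_Ico]
    omega
  have hdisj : Disjoint (Finset.range j) (Finset.Ico (j + 1) (n + 1)) := by
    simp only [Finset.disjoint_left, Finset.mem_range, Finset.mem_Ico]
    omega
  rw [hsplit, Finset.prod_union hdisj, hilb_prod_range_sub, hilb_prod_Ico_sub n j hj]

private lemma hilb_prod_neg_nodes (n j : ℕ) :
    ∏ m ∈ Finset.range (n + 1), (-((j : ℝ) + 1) - m) =
      (-1) ^ (n + 1) * (((n + 1 + j)! : ℝ) / (j ! : ℝ)) := by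
  have : ∀ m ∈ Finset.range (n + 1), (-((j : ℝ) + 1) - m) = (-1) * ((j : ℝ) + 1 + m) :=
    fun m _ => by ring
  rw [Finset.prod_congr rfl this, Finset.prod_mul_distrib, hilb_prod_shift_real,
    Finset.prod_const, Finset.card_range]

private noncomputable def hilbB (n j k : ℕ) : ℝ :=
  (-1 : ℝ) ^ (j + k) * ((j : ℝ) + (k : ℝ) + 1) *
    (Nat.choose (n + j + 1) (n - k) : ℝ) * (Nat.choose (n + k + 1) (n - j) : ℝ) *
    (Nat.choose (j + k) j : ℝ) * (Nat.choose (j + k) k : ℝ)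

private lemma hilb_key (n j k : ℕ) (hj : j ≤ n) (hk : k ≤ n) :
    hilbB n j k
    * ((-1 : ℝ) ^ j * (j ! : ℝ) * ((n - j)! : ℝ))
    * ((-1 : ℝ) ^ n * (-1 : ℝ) ^ k * (k ! : ℝ) * ((n - k)! : ℝ))
    * (-((j : ℝ) + 1) - k)
    = (((n + 1 + k)! : ℝ) / (k ! : ℝ)) *
        ((-1 : ℝ) ^ (n + 1) * (((n + 1 + j)! : ℝ) / (j ! : ℝ))) := by
  unfold hilbB
  have e1 : n + j + 1 - (n - k) = j + k + 1 := by omega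
  have e2 : n + k + 1 - (n - j) = j + k + 1 := by omega
  have e3 : j + k - j = k := by omega
  have e4 : j + k - k = j := by omega
  rw [Nat.cast_choose ℝ (show n - k ≤ n + j + 1 by omega),
      Nat.cast_choose ℝ (show n - j ≤ n + k + 1 by omega),
      Nat.cast_choose ℝ (show j ≤ j + k by omega),
      Nat.cast_choose ℝ (show k ≤ j + k by omega), e1, e2, e3, e4,
      show n + 1 + k = n + k + 1 by ring, show n + 1 + j = n + j + 1 by ring,
      show j + k + 1 = (j + k) + 1 from rfl, Nat.factorial_succ (j + k)]
  have f0 : ∀ m : ℕ, ((m ! : ℕ) : ℝ) ≠ 0 := fun m => by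
    exact_mod_cast Nat.factorial_ne_zero m
  have hjk : ((j : ℝ) + k + 1) ≠ 0 := by positivity
  rw [pow_add, pow_succ]
  field_simp
  ring_nf
  simp only [pow_mul', neg_one_sq, one_pow, one_mul]
  push_cast
  ring

set_option maxHeartbeats 1000000 in
private lemma hilb_main (n l k : ℕ) (hl : l ≤ n) (hk : k ≤ n) :
    ∑ j ∈ Finset.range (n + 1), (1 / ((l : ℝ) + j + 1)) * hilbB n j k =
      if l = k then 1 else 0 := by
  classical
  set s : Finset ℕ := Finset.range (n + 1) with hs
  set v1 : ℕ → ℝ := fun m => (m : ℝ) with hv1def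
  set v2 : ℕ → ℝ := fun m => -((m : ℝ) + 1) with hv2def
  have hv1 : Set.InjOn v1 s := fun a _ c _ h => by simpa [hv1def] using h
  have hv2 : Set.InjOn v2 s := fun a _ c _ h => by
    simp only [hv2def, neg_inj, add_left_inj] at h
    exact_mod_cast h
  have hks : k ∈ s := by simp only [hs, Finset.mem_range]; omega
  have hls : l ∈ s := by simp only [hs, Finset.mem_range]; omega
  have f0 : ∀ m : ℕ, ((m ! : ℕ) : ℝ) ≠ 0 := fun m => by
    exact_mod_cast Nat.factorial_ne_zero m
  set Qk : ℝ := ((n + 1 + k)! : ℝ) / (k ! : ℝ) with hQkdef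
  set Ql : ℝ := ((n + 1 + l)! : ℝ) / (l ! : ℝ) with hQldef
  have hQl0 : Ql ≠ 0 := by
    rw [hQldef]
    exact div_ne_zero (f0 _) (f0 _)
  have hQlprod : ∏ m ∈ s, ((l : ℝ) + m + 1) = Ql := by
    rw [hQldef, ← hilb_prod_shift_real n l]
    exact Finset.prod_congr rfl fun m _ => by ring
  set Rk : ℝ[X] := C Qk * Lagrange.basis s v1 k with hRk
  have hdeg : Rk.degree < (#s : WithBot ℕ) := by
    calc Rk.degree ≤ (Lagrange.basis s v1 k).degree := by
          rw [hRk]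
          refine (degree_mul_le _ _).trans ?_
          have h0 : (C Qk).degree ≤ 0 := degree_C_le
          calc (C Qk).degree + (Lagrange.basis s v1 k).degree
              ≤ 0 + (Lagrange.basis s v1 k).degree := add_le_add_left h0 _
            _ = (Lagrange.basis s v1 k).degree := zero_add _
      _ = ((#s - 1 : ℕ) : WithBot ℕ) := Lagrange.degree_basis hv1 hks
      _ < (#s : WithBot ℕ) := by
          rw [Nat.cast_lt]
          simp [hs]
  have hinterp : Rk = Lagrange.interpolate s v2 (fun j => Rk.eval (v2 j)) :=
    Lagrange.eq_interpolate hv2 hdeg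
  have heval : Rk.eval (v1 l) =
      ∑ j ∈ s, Rk.eval (v2 j) * (Lagrange.basis s v2 j).eval (v1 l) := by
    conv_lhs => rw [hinterp]
    rw [Lagrange.interpolate_apply, eval_finset_sum]
    simp [eval_mul]
  have hRkl : Rk.eval (v1 l) = if l = k then Qk else 0 := by
    rw [hRk]
    by_cases h : l = k
    · subst h
      simp [Lagrange.eval_basis_self hv1 hks]
    · simp [h, Lagrange.eval_basis_of_ne (fun hc => h hc.symm) hls]
  -- per-term computation
  have hterm : ∀ j ∈ s, Rk.eval (v2 j) * (Lagrange.basis s v2 j).eval (v1 l) =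
      ((1 / ((l : ℝ) + j + 1)) * hilbB n j k) * Ql := by
    intro j hjs
    have hjn : j ≤ n := by
      simp only [hs, Finset.mem_range] at hjs; omega
    -- eval of Rk at v2 j
    have hPk : ∏ m ∈ s.erase k, (v1 k - v1 m) =
        (-1) ^ n * (-1) ^ k * (k ! : ℝ) * ((n - k)! : ℝ) := by
      have hcard : #(s.erase k) = n := by
        rw [Finset.card_erase_of_mem hks]
        simp [hs]
      have : ∀ m ∈ s.erase k, (v1 k - v1 m) = (-1) * ((m : ℝ) - k) := fun m _ => by
        simp only [hv1def]; ring
      rw [Finset.prod_congr rfl this, Finset.prod_mul_distrib, Finset.prod_const, hcard]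
      rw [hs, hilb_prod_erase_sub n k hk]
      try ring
    have hNk : ∏ m ∈ s.erase k, (v2 j - v1 m) =
        ((-1) ^ (n + 1) * (((n + 1 + j)! : ℝ) / (j ! : ℝ))) / (-((j : ℝ) + 1) - k) := by
      have hfull := Finset.mul_prod_erase s (fun m => (v2 j - v1 m)) hks
      have hprodfull : ∏ m ∈ s, (v2 j - v1 m) =
          (-1) ^ (n + 1) * (((n + 1 + j)! : ℝ) / (j ! : ℝ)) := by
        rw [hs, ← hilb_prod_neg_nodes n j]
        try exact Finset.prod_congr rfl fun m _ => by simp only [hv1def, hv2def]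
      have hfk : v2 j - v1 k = -((j : ℝ) + 1) - k := by simp [hv1def, hv2def]
      have hfk0 : (-((j : ℝ) + 1) - k) ≠ 0 := by
        have : (0 : ℝ) < (j : ℝ) + 1 + k := by positivity
        intro hc; nlinarith
      rw [eq_div_iff hfk0, ← hfk, mul_comm]
      rw [hfull, hprodfull]
    have hRkj : Rk.eval (v2 j) =
        Qk * ((-1) ^ n * (-1) ^ k * (k ! : ℝ) * ((n - k)! : ℝ))⁻¹ *
          (((-1) ^ (n + 1) * (((n + 1 + j)! : ℝ) / (j ! : ℝ))) / (-((j : ℝ) + 1) - k)) := by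
      rw [hRk]
      simp only [eval_mul, eval_C, Lagrange.basis, Lagrange.basisDivisor, eval_prod, eval_mul,
        eval_C, eval_sub, eval_X]
      rw [Finset.prod_mul_distrib, Finset.prod_inv_distrib, hPk, hNk]
      ring
    -- eval of basis (s, v2, j) at v1 l
    have hPj : ∏ m ∈ s.erase j, (v2 j - v2 m) =
        (-1) ^ j * (j ! : ℝ) * ((n - j)! : ℝ) := by
      have : ∀ m ∈ s.erase j, (v2 j - v2 m) = ((m : ℝ) - j) := fun m _ => by
        simp only [hv2def]; ring
      rw [Finset.prod_congr rfl this, hs, hilb_prod_erase_sub n j hjn]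
    have hLj : ∏ m ∈ s.erase j, (v1 l - v2 m) = Ql / ((l : ℝ) + j + 1) := by
      have hfull := Finset.mul_prod_erase s (fun m => (v1 l - v2 m)) hjs
      have hprodfull : ∏ m ∈ s, (v1 l - v2 m) = Ql := by
        rw [← hQlprod]
        exact Finset.prod_congr rfl fun m _ => by simp only [hv1def, hv2def]; ring
      have hfj : v1 l - v2 j = (l : ℝ) + j + 1 := by simp [hv1def, hv2def]; ring
      have hfj0 : ((l : ℝ) + j + 1) ≠ 0 := by positivity
      rw [eq_div_iff hfj0, ← hfj, mul_comm]
      rw [hfull, hprodfull]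
    have hbasisl : (Lagrange.basis s v2 j).eval (v1 l) =
        ((-1) ^ j * (j ! : ℝ) * ((n - j)! : ℝ))⁻¹ * (Ql / ((l : ℝ) + j + 1)) := by
      simp only [Lagrange.basis, Lagrange.basisDivisor, eval_prod, eval_mul,
        eval_C, eval_sub, eval_X]
      rw [Finset.prod_mul_distrib, Finset.prod_inv_distrib, hPj, hLj]
    rw [hRkj, hbasisl]
    -- now use the key identity
    have key := hilb_key n j k hjn hk
    have hPj0 : ((-1 : ℝ) ^ j * (j ! : ℝ) * ((n - j)! : ℝ)) ≠ 0 := by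
      refine mul_ne_zero (mul_ne_zero (pow_ne_zero _ (by norm_num)) (f0 _)) (f0 _)
    have hPk0 : ((-1 : ℝ) ^ n * (-1 : ℝ) ^ k * (k ! : ℝ) * ((n - k)! : ℝ)) ≠ 0 := by
      refine mul_ne_zero (mul_ne_zero (mul_ne_zero (pow_ne_zero _ (by norm_num))
        (pow_ne_zero _ (by norm_num))) (f0 _)) (f0 _)
    have hfk0 : (-((j : ℝ) + 1) - k) ≠ 0 := by
      have : (0 : ℝ) < (j : ℝ) + 1 + k := by positivity
      intro hc; nlinarith
    have hlj0 : ((l : ℝ) + j + 1) ≠ 0 := by positivity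
    have hb : hilbB n j k = ((((n + 1 + k)! : ℝ) / (k ! : ℝ)) *
        ((-1 : ℝ) ^ (n + 1) * (((n + 1 + j)! : ℝ) / (j ! : ℝ))))
        * ((-1 : ℝ) ^ j * (j ! : ℝ) * ((n - j)! : ℝ))⁻¹
        * ((-1 : ℝ) ^ n * (-1 : ℝ) ^ k * (k ! : ℝ) * ((n - k)! : ℝ))⁻¹
        * (-((j : ℝ) + 1) - k)⁻¹ := by
      have h1 := mul_inv_cancel₀ hPj0
      have h2 := mul_inv_cancel₀ hPk0
      have h3 := mul_inv_cancel₀ hfk0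
      calc hilbB n j k
          = hilbB n j k * ((((-1 : ℝ) ^ j * (j ! : ℝ) * ((n - j)! : ℝ)) *
              ((-1 : ℝ) ^ j * (j ! : ℝ) * ((n - j)! : ℝ))⁻¹) *
            ((((-1 : ℝ) ^ n * (-1 : ℝ) ^ k * (k ! : ℝ) * ((n - k)! : ℝ)) *
              ((-1 : ℝ) ^ n * (-1 : ℝ) ^ k * (k ! : ℝ) * ((n - k)! : ℝ))⁻¹) *
             ((-((j : ℝ) + 1) - k) * (-((j : ℝ) + 1) - k)⁻¹))) := by
            rw [h1, h2, h3]; ring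
        _ = _ := by
            linear_combination (((-1 : ℝ) ^ j * (j ! : ℝ) * ((n - j)! : ℝ))⁻¹ *
              ((-1 : ℝ) ^ n * (-1 : ℝ) ^ k * (k ! : ℝ) * ((n - k)! : ℝ))⁻¹ *
              (-((j : ℝ) + 1) - k)⁻¹) * key
    rw [hb, hQkdef]
    ring
  -- put everything together
  have hsum : (∑ j ∈ s, (1 / ((l : ℝ) + j + 1)) * hilbB n j k) * Ql =
      (if l = k then Qk else 0) := by
    rw [← hRkl, heval, Finset.sum_mul]
    exact Finset.sum_congr rfl fun j hj => (hterm j hj).symm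
  have : (∑ j ∈ s, (1 / ((l : ℝ) + j + 1)) * hilbB n j k) =
      (if l = k then Qk else 0) / Ql := by
    rw [eq_div_iff hQl0, hsum]
  rw [hs] at this
  rw [this]
  by_cases h : l = k
  · subst h
    rw [if_pos rfl, if_pos rfl, hQkdef, hQldef]
    exact div_self (div_ne_zero (f0 _) (f0 _))
  · rw [if_neg h, if_neg h, zero_div]

theorem inverse_Hilbert_matrix (n : ℕ) (H B : Matrix (Fin (n + 1)) (Fin (n + 1)) ℝ)
    (hH : ∀ l j : Fin (n + 1), H l j = 1 / ((l : ℕ) + (j : ℕ) + 1 : ℝ))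
    (hB : ∀ l j : Fin (n + 1), B l j =
      (-1 : ℝ) ^ ((l : ℕ) + (j : ℕ)) * ((l : ℕ) + (j : ℕ) + 1 : ℝ) *
        (Nat.choose (n + (l : ℕ) + 1) (n - (j : ℕ)) : ℝ) *
        (Nat.choose (n + (j : ℕ) + 1) (n - (l : ℕ)) : ℝ) *
        (Nat.choose ((l : ℕ) + (j : ℕ)) (l : ℕ) : ℝ) *
        (Nat.choose ((l : ℕ) + (j : ℕ)) (j : ℕ) : ℝ)) :
    H * B = 1 ∧ B * H = 1 := by
  have h1 : H * B = 1 := by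
    ext l k
    rw [Matrix.mul_apply, Matrix.one_apply]
    have hterm : ∀ j : Fin (n + 1), H l j * B j k =
        (1 / (((l : ℕ) : ℝ) + ((j : ℕ) : ℝ) + 1)) * hilbB n (j : ℕ) (k : ℕ) := by
      intro j
      rw [hH, hB]
      unfold hilbB
      ring_nf
    rw [Finset.sum_congr rfl fun j _ => hterm j]
    rw [Fin.sum_univ_eq_sum_range (fun j => (1 / (((l : ℕ) : ℝ) + (j : ℝ) + 1)) *
      hilbB n j (k : ℕ)) (n + 1)]
    rw [hilb_main n (l : ℕ) (k : ℕ) (by omega) (by omega)]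
    congr 1
    simp [Fin.ext_iff]
  exact ⟨h1, mul_eq_one_comm.mp h1⟩
end

section
/- The determinant of the Hilbert matrix H_n = (1/(l+j+1))_{0≤l,j≤n} equals (∏_{k=1}^n (2k+1) C(2k,k)^2)^{-1}. -/
open Polynomial Finset

/-- Formal integral over [0,1]: `II P = ∑ j, coeff j / (j+1)`. -/
noncomputable def II : ℝ[X] →ₗ[ℝ] ℝ :=
  Polynomial.lsum fun j => ((j : ℝ) + 1)⁻¹ • LinearMap.id

lemma II_monomial (j : ℕ) (a : ℝ) : II (monomial j a) = a / (j + 1) := by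
  simp [II, Polynomial.lsum_apply, Polynomial.sum_monomial_index, div_eq_inv_mul]

lemma II_C_mul_X_pow (j : ℕ) (a : ℝ) : II (C a * X ^ j) = a / (j + 1) := by
  rw [C_mul_X_pow_eq_monomial, II_monomial]

lemma II_X_pow (j : ℕ) : II (X ^ j : ℝ[X]) = 1 / (j + 1) := by
  simpa using II_C_mul_X_pow j 1

lemma II_derivative (P : ℝ[X]) : II (derivative P) = P.eval 1 - P.eval 0 := by
  induction P using Polynomial.induction_on' with
  | add p q hp hq => simp [hp, hq]; ring
  | monomial n a =>
    cases n with
    | zero => simp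
    | succ n =>
      rw [derivative_monomial, II_monomial]
      push_cast
      simp only [Nat.add_sub_cancel, eval_monomial, one_pow, mul_one, ne_eq]
      rw [zero_pow (Nat.succ_ne_zero n), mul_zero, sub_zero,
        mul_div_assoc, div_self (by positivity), mul_one]

noncomputable def pp (k : ℕ) : ℝ[X] := X ^ k * (X - 1) ^ k

lemma pp_monic (k : ℕ) : (pp k).Monic := by
  have h1 : ((X : ℝ[X]) - 1) = X - C 1 := by simp
  rw [pp, h1]
  exact (monic_X_pow k).mul ((monic_X_sub_C (1:ℝ)).pow k)

lemma natDegree_pp (k : ℕ) : (pp k).natDegree = 2 * k := by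
  have h1 : ((X : ℝ[X]) - 1) = X - C 1 := by simp
  rw [pp, h1, natDegree_mul (pow_ne_zero k X_ne_zero) ((monic_X_sub_C (1:ℝ)).pow k).ne_zero,
    natDegree_X_pow, natDegree_pow, natDegree_X_sub_C]
  ring

lemma eval_iterate_pp (k i : ℕ) (hi : i < k) :
    (derivative^[i] (pp k)).eval 0 = 0 ∧ (derivative^[i] (pp k)).eval 1 = 0 := by
  constructor
  · obtain ⟨r, hr⟩ := pow_sub_dvd_iterate_derivative_of_pow_dvd (p := pp k) (q := (X:ℝ[X])) i
      (dvd_mul_right _ _)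
    rw [hr]
    simp [zero_pow (Nat.sub_ne_zero_of_lt hi)]
  · obtain ⟨r, hr⟩ := pow_sub_dvd_iterate_derivative_of_pow_dvd (p := pp k) (q := ((X:ℝ[X]) - 1)) i
      (dvd_mul_left _ _)
    rw [hr]
    simp [zero_pow (Nat.sub_ne_zero_of_lt hi)]

noncomputable def qq (k : ℕ) : ℝ[X] := derivative^[k] (pp k)

/-- Integration by parts specialised: for `1 ≤ i ≤ k`,
`II (X^m * derivative^[i] (pp k)) = -(m) * II (X^(m-1) * derivative^[i-1] (pp k))`-ish. -/
lemma II_parts (k i m : ℕ) (hik : i + 1 ≤ k) :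
    II (X ^ (m + 1) * derivative^[i + 1] (pp k)) =
      -((m : ℝ) + 1) * II (X ^ m * derivative^[i] (pp k)) := by
  have hb := eval_iterate_pp k i hik
  have hd : derivative ((X : ℝ[X]) ^ (m + 1) * derivative^[i] (pp k)) =
      C ((m : ℝ) + 1) * (X ^ m * derivative^[i] (pp k))
        + X ^ (m + 1) * derivative^[i + 1] (pp k) := by
    rw [derivative_mul, derivative_X_pow, Function.iterate_succ_apply']
    push_cast
    ring
  have := II_derivative ((X : ℝ[X]) ^ (m + 1) * derivative^[i] (pp k))
  rw [hd, map_add] at this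
  simp only [eval_mul, eval_pow, eval_X, hb.1, hb.2, mul_zero, one_pow, mul_one,
    zero_pow (Nat.succ_ne_zero m), zero_mul, sub_zero, sub_self] at this
  have h2 : II (C ((m : ℝ) + 1) * (X ^ m * derivative^[i] (pp k)))
      = ((m : ℝ) + 1) * II (X ^ m * derivative^[i] (pp k)) := by
    rw [← smul_eq_C_mul, map_smul, smul_eq_mul]
  rw [h2] at this
  linarith

lemma lemA_s10 (k : ℕ) : ∀ m i : ℕ, m < i → i ≤ k → II (X ^ m * derivative^[i] (pp k)) = 0 := by
  intro m
  induction m with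
  | zero =>
    rintro (_ | i) hmi hik
    · omega
    · rw [pow_zero, one_mul, Function.iterate_succ_apply', II_derivative,
        (eval_iterate_pp k i hik).1, (eval_iterate_pp k i hik).2, sub_zero]
  | succ m ih =>
    rintro (_ | i) hmi hik
    · omega
    · rw [II_parts k i m hik, ih i (by omega) (by omega), mul_zero]

lemma lemB (k : ℕ) : ∀ i : ℕ, i ≤ k →
    II (X ^ i * derivative^[i] (pp k)) = (-1) ^ i * (Nat.factorial i : ℝ) * II (pp k) := by
  intro i
  induction i with
  | zero => intro _; simp
  | succ i ih =>
    intro hik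
    rw [II_parts k i i hik, ih (by omega)]
    push_cast [Nat.factorial_succ]
    ring

noncomputable def J (a b : ℕ) : ℝ := II (X ^ a * (X - 1) ^ b)

lemma J_zero (b : ℕ) : J 0 b = (-1) ^ b / (b + 1) := by
  have hd : derivative (((X : ℝ[X]) - 1) ^ (b + 1)) = C ((b : ℝ) + 1) * (X - 1) ^ b := by
    rw [derivative_pow]
    push_cast
    simp
  have h := II_derivative (((X : ℝ[X]) - 1) ^ (b + 1))
  rw [hd, ← smul_eq_C_mul, map_smul, smul_eq_mul] at h
  simp only [eval_pow, eval_sub, eval_one, eval_X, sub_self, zero_sub, one_pow,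
    zero_pow (Nat.succ_ne_zero b)] at h
  have hb : ((b : ℝ) + 1) ≠ 0 := by positivity
  rw [J, pow_zero, one_mul, eq_div_iff hb]
  linear_combination h

lemma J_rec1 (a b : ℕ) : ((a : ℝ) + 1) * J a (b + 1) + ((b : ℝ) + 1) * J (a + 1) b = 0 := by
  have hd : derivative ((X : ℝ[X]) ^ (a + 1) * (X - 1) ^ (b + 1)) =
      C ((a : ℝ) + 1) * (X ^ a * (X - 1) ^ (b + 1))
        + C ((b : ℝ) + 1) * (X ^ (a + 1) * (X - 1) ^ b) := by
    rw [derivative_mul, derivative_X_pow, derivative_pow]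
    simp only [derivative_sub, derivative_X, derivative_one, sub_zero, mul_one,
      Nat.add_sub_cancel]
    push_cast
    ring
  have h := II_derivative ((X : ℝ[X]) ^ (a + 1) * (X - 1) ^ (b + 1))
  rw [hd, map_add, ← smul_eq_C_mul, ← smul_eq_C_mul, map_smul, map_smul] at h
  simp only [eval_mul, eval_pow, eval_sub, eval_one, eval_X, sub_self, one_pow, mul_zero,
    zero_pow (Nat.succ_ne_zero a), zero_pow (Nat.succ_ne_zero b), one_mul, zero_mul,
    sub_zero, sub_self, smul_eq_mul] at h
  rw [J, J]
  linarith

lemma J_rec2 (a b : ℕ) : J a (b + 1) = J (a + 1) b - J a b := by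
  have : (X : ℝ[X]) ^ a * (X - 1) ^ (b + 1)
      = X ^ (a + 1) * (X - 1) ^ b - X ^ a * (X - 1) ^ b := by ring
  rw [J, this, map_sub]
  rfl

lemma J_formula : ∀ a b : ℕ, J a b =
    (-1) ^ b * (Nat.factorial a : ℝ) * (Nat.factorial b : ℝ) / (Nat.factorial (a + b + 1) : ℝ) := by
  intro a
  induction a with
  | zero =>
    intro b
    rw [J_zero, Nat.zero_add, Nat.factorial_succ, Nat.factorial_zero]
    have hb : (Nat.factorial b : ℝ) ≠ 0 := Nat.cast_ne_zero.2 (Nat.factorial_ne_zero b)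
    push_cast
    field_simp
  | succ a ih =>
    intro b
    have h1 := J_rec1 a b
    have h2 := J_rec2 a b
    have key : ((a : ℝ) + (b : ℝ) + 2) * J (a + 1) b = ((a : ℝ) + 1) * J a b := by
      rw [h2] at h1
      ring_nf at h1 ⊢
      linarith
    rw [ih b] at key
    have hab : ((a : ℝ) + (b : ℝ) + 2) ≠ 0 := by positivity
    have hfab : (Nat.factorial (a + b + 1) : ℝ) ≠ 0 := Nat.cast_ne_zero.2 (Nat.factorial_ne_zero _)
    have hstep : (Nat.factorial (a + 1 + b + 1) : ℝ)
        = ((a : ℝ) + (b : ℝ) + 2) * (Nat.factorial (a + b + 1) : ℝ) := by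
      have : a + 1 + b + 1 = (a + b + 1) + 1 := by omega
      rw [this, Nat.factorial_succ]
      push_cast
      ring
    have hfs : ((Nat.factorial (a + 1)) : ℝ) = ((a : ℝ) + 1) * (Nat.factorial a : ℝ) := by
      rw [Nat.factorial_succ]
      push_cast
      ring
    rw [hstep, hfs]
    rw [eq_div_iff (by positivity)]
    field_simp at key
    linear_combination key

lemma II_pp (k : ℕ) : II (pp k) =
    (-1) ^ k * (Nat.factorial k : ℝ) ^ 2 / (Nat.factorial (2 * k + 1) : ℝ) := by
  have h := J_formula k k
  rw [J] at h
  rw [pp, h, show k + k + 1 = 2 * k + 1 from by ring]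
  ring

lemma II_X_pow_qq (k : ℕ) : II (X ^ k * qq k) =
    (Nat.factorial k : ℝ) ^ 3 / (Nat.factorial (2 * k + 1) : ℝ) := by
  rw [qq, lemB k k le_rfl, II_pp]
  have h1 : ((-1 : ℝ)) ^ k * (-1) ^ k = 1 := by
    rw [← pow_add]
    exact Even.neg_one_pow ⟨k, rfl⟩
  field_simp
  linear_combination h1

lemma natDegree_qq (k : ℕ) : (qq k).natDegree ≤ k := by
  have h := natDegree_iterate_derivative (pp k) k
  rw [natDegree_pp] at h
  rw [qq]
  omega

lemma coeff_qq_self (k : ℕ) :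
    (qq k).coeff k = (Nat.factorial k : ℝ) * (Nat.choose (2 * k) k : ℝ) := by
  have hlc : (pp k).coeff (2 * k) = 1 := by
    have h := (pp_monic k).leadingCoeff
    rwa [leadingCoeff, natDegree_pp] at h
  rw [qq, coeff_iterate_derivative, show k + k = 2 * k from by ring, hlc,
    Nat.descFactorial_eq_factorial_mul_choose]
  simp [nsmul_eq_mul]

lemma coeff_qq_zero (k j : ℕ) (h : k < j) : (qq k).coeff j = 0 :=
  coeff_eq_zero_of_natDegree_lt (lt_of_le_of_lt (natDegree_qq k) h)

lemma II_mul_qq_eq_zero (k : ℕ) (P : ℝ[X]) (h : P.natDegree < k) : II (P * qq k) = 0 := by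
  conv_lhs => rw [P.as_sum_range_C_mul_X_pow, Finset.sum_mul, map_sum]
  refine Finset.sum_eq_zero fun m hm => ?_
  rw [Finset.mem_range] at hm
  rw [mul_assoc, ← smul_eq_C_mul, map_smul, qq,
    lemA_s10 k m k (by omega) le_rfl, smul_zero]

noncomputable def lc (k : ℕ) : ℝ := (Nat.factorial k : ℝ) * (Nat.choose (2 * k) k : ℝ)

lemma choose_2k_pos (k : ℕ) : 0 < Nat.choose (2 * k) k := Nat.choose_pos (by omega)

lemma lc_ne_zero (k : ℕ) : lc k ≠ 0 := by
  have h1 : (0:ℝ) < Nat.factorial k := by exact_mod_cast Nat.factorial_pos k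
  have h2 : (0:ℝ) < Nat.choose (2 * k) k := by exact_mod_cast choose_2k_pos k
  rw [lc]
  positivity

noncomputable def phat (k : ℕ) : ℝ[X] := C (lc k)⁻¹ * qq k

lemma coeff_phat_self (k : ℕ) : (phat k).coeff k = 1 := by
  rw [phat, coeff_C_mul, coeff_qq_self, ← lc, inv_mul_cancel₀ (lc_ne_zero k)]

lemma coeff_phat_zero (k j : ℕ) (h : k < j) : (phat k).coeff j = 0 := by
  rw [phat, coeff_C_mul, coeff_qq_zero k j h, mul_zero]

lemma natDegree_phat (k : ℕ) : (phat k).natDegree ≤ k :=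
  (natDegree_C_mul_le _ _).trans (natDegree_qq k)

lemma II_phat_orth (i j : ℕ) (hij : j < i) : II (phat j * phat i) = 0 := by
  have h : phat j * phat i = C (lc i)⁻¹ * (phat j * qq i) := by
    rw [phat, phat]; ring
  rw [h, ← smul_eq_C_mul, map_smul,
    II_mul_qq_eq_zero i (phat j) (lt_of_le_of_lt (natDegree_phat j) hij), smul_zero]

noncomputable def dd (k : ℕ) : ℝ :=
  (((2 * k + 1 : ℕ) : ℝ) * (Nat.choose (2 * k) k : ℝ) ^ 2)⁻¹

lemma II_phat_diag (k : ℕ) : II (phat k * phat k) = dd k := by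
  have hx : II (X ^ k * phat k) = (lc k)⁻¹ * ((Nat.factorial k : ℝ) ^ 3 /
      (Nat.factorial (2 * k + 1) : ℝ)) := by
    rw [phat, show (X:ℝ[X])^k * (C (lc k)⁻¹ * qq k) = C (lc k)⁻¹ * (X^k * qq k) from by ring,
      ← smul_eq_C_mul, map_smul, II_X_pow_qq, smul_eq_mul]
  have hr : II ((phat k - X ^ k) * phat k) = 0 := by
    rcases eq_or_ne (phat k - X ^ k) 0 with h0 | h0
    · rw [h0, zero_mul, map_zero]
    · have hdeg : (phat k - X ^ k).natDegree < k := by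
        rcases Nat.eq_zero_or_pos k with rfl | hk
        · exfalso
          apply h0
          have hqq : qq 0 = 1 := by simp [qq, pp]
          have hlc : lc 0 = 1 := by norm_num [lc, Nat.factorial]
          simp [phat, hqq, hlc]
        · refine (natDegree_lt_iff_degree_lt h0).mpr ?_
          rw [degree_lt_iff_coeff_zero]
          intro m hm
          have hm' : k ≤ m := by exact_mod_cast hm
          rw [coeff_sub, coeff_X_pow]
          rcases eq_or_lt_of_le hm' with rfl | hlt
          · rw [coeff_phat_self]
            simp
          · rw [coeff_phat_zero k m hlt, if_neg (by omega)]
            simp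
      have h : (phat k - X ^ k) * phat k = C (lc k)⁻¹ * ((phat k - X ^ k) * qq k) := by
        rw [phat]; ring
      rw [h, ← smul_eq_C_mul, map_smul, II_mul_qq_eq_zero k _ hdeg, smul_zero]
  have : phat k * phat k = X ^ k * phat k + (phat k - X ^ k) * phat k := by ring
  rw [this, map_add, hr, add_zero, hx]
  have hC : (Nat.choose (2 * k) k : ℝ) * (Nat.factorial k : ℝ) * (Nat.factorial k : ℝ)
      = (Nat.factorial (2 * k) : ℝ) := by
    rw [← Nat.cast_mul, ← Nat.cast_mul]
    norm_cast
    have := Nat.choose_mul_factorial_mul_factorial (show k ≤ 2 * k by omega)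
    rwa [show 2 * k - k = k from by omega] at this
  have hfs : ((Nat.factorial (2 * k + 1)) : ℝ)
      = ((2 * k + 1 : ℕ) : ℝ) * (Nat.factorial (2 * k) : ℝ) := by
    rw [Nat.factorial_succ]
    push_cast
    ring
  have p1 : (0:ℝ) < Nat.factorial k := by exact_mod_cast Nat.factorial_pos k
  have p2 : (0:ℝ) < Nat.choose (2 * k) k := by exact_mod_cast choose_2k_pos k
  have p3 : (0:ℝ) < Nat.factorial (2 * k) := by exact_mod_cast Nat.factorial_pos (2 * k)
  have p4 : (0:ℝ) < ((2 * k + 1 : ℕ) : ℝ) := by positivity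
  rw [lc, dd, hfs, ← hC]
  have hC0 : ((Nat.choose (2 * k) k : ℝ)) ≠ 0 := ne_of_gt p2
  have hF0 : ((Nat.factorial k : ℝ)) ≠ 0 := ne_of_gt p1
  field_simp

lemma II_phat_mul (n i j : ℕ) (hi : i ≤ n) (hj : j ≤ n) :
    II (phat i * phat j) = ∑ l ∈ Finset.range (n + 1), ∑ m ∈ Finset.range (n + 1),
      (phat i).coeff l * (phat j).coeff m / ((l : ℝ) + (m : ℝ) + 1) := by
  conv_lhs => rw [(phat i).as_sum_range' (n + 1) ((natDegree_phat i).trans_lt (by omega)),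
    (phat j).as_sum_range' (n + 1) ((natDegree_phat j).trans_lt (by omega))]
  rw [Finset.sum_mul_sum, map_sum]
  refine Finset.sum_congr rfl fun l _ => ?_
  rw [map_sum]
  refine Finset.sum_congr rfl fun m _ => ?_
  rw [monomial_mul_monomial, II_monomial]
  push_cast
  ring

open Matrix in
theorem det_Hilbert_matrix (n : ℕ) (H : Matrix (Fin (n + 1)) (Fin (n + 1)) ℝ)
    (hH : ∀ l j : Fin (n + 1), H l j = 1 / ((l : ℕ) + (j : ℕ) + 1 : ℝ)) :
    H.det = (∏ k ∈ Finset.Icc 1 n,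
      ((2 * k + 1 : ℕ) : ℝ) * (Nat.choose (2 * k) k : ℝ) ^ 2)⁻¹ := by
  classical
  set B : Matrix (Fin (n + 1)) (Fin (n + 1)) ℝ :=
    Matrix.of fun i j => (phat (i : ℕ)).coeff (j : ℕ) with hB
  have hentry : ∀ i j : Fin (n + 1), (B * H * Bᵀ) i j = II (phat (i : ℕ) * phat (j : ℕ)) := by
    intro i j
    rw [II_phat_mul n (i : ℕ) (j : ℕ) (by omega) (by omega)]
    have hfin : ∀ l m : ℕ, l < n + 1 → m < n + 1 → True := fun _ _ _ _ => trivial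
    rw [show ∑ l ∈ Finset.range (n + 1), ∑ m ∈ Finset.range (n + 1),
        (phat (i:ℕ)).coeff l * (phat (j:ℕ)).coeff m / ((l : ℝ) + (m : ℝ) + 1)
        = ∑ l : Fin (n + 1), ∑ m : Fin (n + 1),
        (phat (i:ℕ)).coeff (l:ℕ) * (phat (j:ℕ)).coeff (m:ℕ)
          / (((l:ℕ) : ℝ) + ((m:ℕ) : ℝ) + 1) from by
      rw [Fin.sum_univ_eq_sum_range (fun l => ∑ m : Fin (n + 1),
        (phat (i:ℕ)).coeff l * (phat (j:ℕ)).coeff (m:ℕ) / ((l : ℝ) + ((m:ℕ) : ℝ) + 1)) (n + 1)]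
      exact Finset.sum_congr rfl fun l _ =>
        (Fin.sum_univ_eq_sum_range (fun m =>
          (phat (i:ℕ)).coeff l * (phat (j:ℕ)).coeff m / ((l : ℝ) + (m : ℝ) + 1)) (n + 1)).symm]
    rw [Matrix.mul_apply]
    simp_rw [Matrix.mul_apply, Matrix.transpose_apply, Finset.sum_mul]
    rw [Finset.sum_comm]
    refine Finset.sum_congr rfl fun l _ => Finset.sum_congr rfl fun m _ => ?_
    rw [hH l m, hB]
    simp only [Matrix.of_apply]
    ring
  have hdiag : B * H * Bᵀ = Matrix.diagonal (fun i : Fin (n + 1) => dd (i : ℕ)) := by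
    ext i j
    rw [hentry i j]
    rcases eq_or_ne i j with rfl | hij
    · rw [Matrix.diagonal_apply_eq, II_phat_diag]
    · rw [Matrix.diagonal_apply_ne _ hij]
      rcases lt_or_gt_of_ne (fun h : (i : ℕ) = (j : ℕ) => hij (Fin.ext h)) with h | h
      · exact II_phat_orth (j : ℕ) (i : ℕ) h
      · rw [mul_comm]
        exact II_phat_orth (i : ℕ) (j : ℕ) h
  have hBt_tri : (Bᵀ).BlockTriangular id := by
    intro i j hij
    exact coeff_phat_zero _ _ hij
  have hdetBt : (Bᵀ).det = 1 := by
    rw [Matrix.det_of_upperTriangular hBt_tri]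
    refine Finset.prod_eq_one fun i _ => coeff_phat_self (i : ℕ)
  have hdetB : B.det = 1 := by
    rw [← Matrix.det_transpose]; exact hdetBt
  have hdet : H.det = ∏ i : Fin (n + 1), dd (i : ℕ) := by
    have h2 := congrArg Matrix.det hdiag
    rw [Matrix.det_mul, Matrix.det_mul, hdetB, hdetBt, one_mul, mul_one,
      Matrix.det_diagonal] at h2
    exact h2
  rw [hdet, Fin.prod_univ_eq_prod_range (fun k => dd k) (n + 1)]
  have hcg : ∀ k ∈ Finset.range (n + 1), dd k =
      (((2 * k + 1 : ℕ) : ℝ) * (Nat.choose (2 * k) k : ℝ) ^ 2)⁻¹ := fun k _ => rfl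
  rw [Finset.prod_congr rfl hcg, ← Finset.prod_inv_distrib]
  have hps : ∏ k ∈ Finset.Icc 1 n, (((2 * k + 1 : ℕ) : ℝ) * (Nat.choose (2 * k) k : ℝ) ^ 2)⁻¹
      = ∏ k ∈ Finset.range (n + 1), (((2 * k + 1 : ℕ) : ℝ) * (Nat.choose (2 * k) k : ℝ) ^ 2)⁻¹ := by
    apply Finset.prod_subset
    · intro k hk
      rw [Finset.mem_Icc] at hk
      exact Finset.mem_range.mpr (by omega)
    intro k hk hk'
    have hk0 : k = 0 := by
      rw [Finset.mem_range] at hk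
      rw [Finset.mem_Icc] at hk'
      omega
    subst hk0
    norm_num
  rw [← hps, Finset.prod_inv_distrib]
end

section
/- For real α > 0, the inverse of the matrix H_n^{(α)} = (α/(l+j+α))_{0≤l,j≤n} has (l,j)-entry (−1)^{l+j} ((l+j+α)/α) binom(n+l+α, n−j) binom(n+j+α, n−l) binom(l+j+α−1, l) binom(l+j+α−1, j), where binom(x,k) = x(x−1)⋯(x−k+1)/k! denotes the generalized binomial coefficient. -/
/-- generalized binomial coefficient `binom(x, k) = x(x-1)⋯(x-k+1)/k!` for real `x`. -/
noncomputable def gbinom (x : ℝ) (k : ℕ) : ℝ :=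
  (∏ i ∈ Finset.range k, (x - i)) / (Nat.factorial k : ℝ)

open Finset

lemma prod_cast_succ (N : ℕ) : ∏ i ∈ Finset.range N, ((i:ℝ)+1) = Nat.factorial N := by
  induction N with
  | zero => simp
  | succ N ih => rw [Finset.prod_range_succ, ih, Nat.factorial_succ]; push_cast; ring

lemma prod_sub_self (N : ℕ) : ∏ k ∈ Finset.range N, ((N:ℝ) - (k:ℕ)) = Nat.factorial N := by
  induction N with
  | zero => simp
  | succ N ih =>
    rw [Finset.prod_range_succ']
    have h : ∀ i ∈ Finset.range N, (((N+1:ℕ)):ℝ) - ((i+1:ℕ):ℝ) = (N:ℝ) - i := by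
      intro i _; push_cast; ring
    rw [Finset.prod_congr rfl h, ih, Nat.factorial_succ]
    push_cast; ring

lemma prod_sub_self' (N : ℕ) :
    ∏ k ∈ Finset.range N, ((k:ℝ) - (N:ℕ)) = (-1:ℝ)^N * Nat.factorial N := by
  have h : ∀ k ∈ Finset.range N, ((k:ℝ) - N) = (-1) * ((N:ℝ) - k) := by intro k _; ring
  rw [Finset.prod_congr rfl h, Finset.prod_mul_distrib, Finset.prod_const, prod_sub_self,
    Finset.card_range]

lemma prod_Ico_sub (n j : ℕ) (hj : j ≤ n) :
    ∏ k ∈ Finset.Ico (j+1) (n+1), ((k:ℝ) - (j:ℕ)) = Nat.factorial (n - j) := by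
  rw [Finset.prod_Ico_eq_prod_range]
  have hc : n + 1 - (j + 1) = n - j := by omega
  rw [hc]
  have h : ∀ i ∈ Finset.range (n-j), ((j+1+i:ℕ):ℝ) - (j:ℕ) = (i:ℝ) + 1 := by
    intro i _; push_cast; ring
  rw [Finset.prod_congr rfl h, prod_cast_succ]

lemma prod_Ico_sub' (n j : ℕ) (hj : j ≤ n) :
    ∏ k ∈ Finset.Ico (j+1) (n+1), ((j:ℝ) - (k:ℕ)) = (-1:ℝ)^(n-j) * Nat.factorial (n - j) := by
  have h : ∀ k ∈ Finset.Ico (j+1) (n+1), ((j:ℝ) - k) = (-1) * ((k:ℝ) - j) := by intro k _; ring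
  rw [Finset.prod_congr rfl h, Finset.prod_mul_distrib, Finset.prod_const, prod_Ico_sub n j hj,
    Nat.card_Ico]
  congr 2
  omega

lemma erase_range_split (n j : ℕ) (hj : j < n+1) (f : ℕ → ℝ) :
    ∏ k ∈ (Finset.range (n+1)).erase j, f k
      = (∏ k ∈ Finset.range j, f k) * ∏ k ∈ Finset.Ico (j+1) (n+1), f k := by
  have hs : (Finset.range (n+1)).erase j = Finset.range j ∪ Finset.Ico (j+1) (n+1) := by
    ext k
    simp only [Finset.mem_erase, Finset.mem_range, Finset.mem_union, Finset.mem_Ico]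
    omega
  have hd : Disjoint (Finset.range j) (Finset.Ico (j+1) (n+1)) := by
    simp only [Finset.disjoint_left, Finset.mem_range, Finset.mem_Ico]
    omega
  rw [hs, Finset.prod_union hd]

lemma fin_erase_prod (n : ℕ) (j : Fin (n+1)) (f : ℕ → ℝ) :
    ∏ k ∈ Finset.univ.erase j, f (k:ℕ) = ∏ k ∈ (Finset.range (n+1)).erase (j:ℕ), f k := by
  have him : (Finset.range (n+1)).erase (j:ℕ) = (Finset.univ.erase j).image Fin.val := by
    ext k
    simp only [Finset.mem_erase, Finset.mem_range, Finset.mem_image, Finset.mem_univ, and_true]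
    constructor
    · rintro ⟨hne, hlt⟩
      exact ⟨⟨k, hlt⟩, fun h => hne (by simpa using congrArg Fin.val h), rfl⟩
    · rintro ⟨a, ha, rfl⟩
      exact ⟨fun h => ha (Fin.ext h), a.isLt⟩
  rw [him, Finset.prod_image (fun a _ b _ h => Fin.ext h)]



lemma subA1 (m : ℕ) (x : ℝ) :
    ∏ i ∈ Finset.range m, (x + (m:ℕ) - 1 - (i:ℕ)) = ∏ k ∈ Finset.range m, (x + (k:ℕ)) := by
  rw [← Finset.prod_range_reflect (fun k => x + (k:ℕ)) m]
  apply Finset.prod_congr rfl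
  intro i hi
  rw [Finset.mem_range] at hi
  have h1 : ((m - 1 - i : ℕ) : ℝ) = (m:ℝ) - 1 - i := by
    have : (1:ℕ) ≤ m := by omega
    rw [Nat.cast_sub (by omega), Nat.cast_sub this]
    push_cast; ring
  rw [h1]; ring

lemma subA2 (n m : ℕ) (hm : m ≤ n) (x : ℝ) :
    ∏ i ∈ Finset.range (n - m), ((n:ℕ) + x - (i:ℕ))
      = ∏ k ∈ Finset.Ico (m+1) (n+1), (x + (k:ℕ)) := by
  rw [Finset.prod_Ico_eq_prod_range]
  have hc : n + 1 - (m + 1) = n - m := by omega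
  rw [hc, ← Finset.prod_range_reflect (fun i => x + ((m+1+i : ℕ):ℕ)) (n-m)]
  apply Finset.prod_congr rfl
  intro i hi
  rw [Finset.mem_range] at hi
  have h1 : ((m + 1 + (n - m - 1 - i) : ℕ) : ℝ) = (n:ℝ) - i := by
    have : m + 1 + (n - m - 1 - i) = n - i := by omega
    rw [this, Nat.cast_sub (by omega)]
  simp only [h1]
  ring

lemma claimA (n m : ℕ) (hm : m < n + 1) (x : ℝ) :
    (∏ i ∈ Finset.range (n - m), ((n:ℕ) + x - (i:ℕ)))
      * (∏ i ∈ Finset.range m, (x + (m:ℕ) - 1 - (i:ℕ)))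
      = ∏ k ∈ (Finset.range (n+1)).erase m, (x + (k:ℕ)) := by
  rw [erase_range_split n m hm, subA1, subA2 n m (by omega), mul_comm]

lemma KI (n : ℕ) (α : ℝ) (hα : 0 < α) (j m : Fin (n+1)) :
    α * ((-1:ℝ) ^ ((j:ℕ) + (m:ℕ)) * (((j:ℕ) + (m:ℕ) + α) / α) *
        gbinom (n + (j:ℕ) + α) (n - (m:ℕ)) * gbinom (n + (m:ℕ) + α) (n - (j:ℕ)) *
        gbinom ((j:ℕ) + (m:ℕ) + α - 1) (j:ℕ) * gbinom ((j:ℕ) + (m:ℕ) + α - 1) (m:ℕ)) *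
      (∏ i ∈ Finset.univ.erase m, (((m:ℕ):ℝ) - ((i:ℕ):ℝ))) *
      (∏ k ∈ Finset.univ.erase j, (((k:ℕ):ℝ) - ((j:ℕ):ℝ))) =
    (∏ k ∈ (Finset.univ : Finset (Fin (n+1))), (((m:ℕ):ℝ) + ((k:ℕ):ℝ) + α)) *
      (∏ i ∈ Finset.univ.erase m, (-(((j:ℕ):ℝ)) - α - ((i:ℕ):ℝ))) := by
  set jn := (j:ℕ) with hjdef
  set mn := (m:ℕ) with hmdef
  have hjn : jn < n + 1 := j.isLt
  have hmn : mn < n + 1 := m.isLt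
  -- convert Fin products to range products
  rw [fin_erase_prod n m (fun i => ((mn:ℝ) - i)),
    fin_erase_prod n j (fun k => ((k:ℝ) - jn)),
    fin_erase_prod n m (fun i => (-(jn:ℝ) - α - i)),
    Fin.prod_univ_eq_prod_range (fun k => ((mn:ℝ) + k + α)) (n+1)]
  -- closed forms
  have h1 : ∏ k ∈ (Finset.range (n+1)).erase mn, ((mn:ℝ) - k)
      = (Nat.factorial mn : ℝ) * ((-1:ℝ)^(n-mn) * Nat.factorial (n-mn)) := by
    rw [erase_range_split n mn hmn, prod_sub_self, prod_Ico_sub' n mn (by omega)]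
  have h2 : ∏ k ∈ (Finset.range (n+1)).erase jn, ((k:ℝ) - jn)
      = ((-1:ℝ)^jn * Nat.factorial jn) * (Nat.factorial (n-jn) : ℝ) := by
    rw [erase_range_split n jn hjn, prod_sub_self', prod_Ico_sub n jn (by omega)]
  have h3 : ∏ k ∈ (Finset.range (n+1)).erase mn, (-(jn:ℝ) - α - k)
      = (-1:ℝ)^n * ∏ k ∈ (Finset.range (n+1)).erase mn, ((jn:ℝ) + α + k) := by
    have h : ∀ k ∈ (Finset.range (n+1)).erase mn, (-(jn:ℝ) - α - k) = (-1) * ((jn:ℝ) + α + k) := by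
      intro k _; ring
    rw [Finset.prod_congr rfl h, Finset.prod_mul_distrib, Finset.prod_const,
      Finset.card_erase_of_mem (Finset.mem_range.mpr hmn), Finset.card_range]
    simp
  have h4 : ∏ k ∈ Finset.range (n+1), ((mn:ℝ) + k + α)
      = ((mn:ℝ) + jn + α) * ∏ k ∈ (Finset.range (n+1)).erase jn, ((mn:ℝ) + α + k) := by
    rw [← Finset.mul_prod_erase (Finset.range (n+1)) _ (Finset.mem_range.mpr hjn)]
    congr 1
    apply Finset.prod_congr rfl
    intro k _; ring
  have eA : gbinom (n + (jn:ℝ) + α) (n - mn) * gbinom ((jn:ℝ) + mn + α - 1) mn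
      = (∏ k ∈ (Finset.range (n+1)).erase mn, ((jn:ℝ) + α + k))
        / ((Nat.factorial (n-mn) : ℝ) * (Nat.factorial mn : ℝ)) := by
    unfold gbinom
    rw [div_mul_div_comm]
    congr 1
    rw [← claimA n mn hmn ((jn:ℝ) + α)]
    congr 1
    · apply Finset.prod_congr rfl; intro i _; ring
    · apply Finset.prod_congr rfl; intro i _; ring
  have eB : gbinom (n + (mn:ℝ) + α) (n - jn) * gbinom ((jn:ℝ) + mn + α - 1) jn
      = (∏ k ∈ (Finset.range (n+1)).erase jn, ((mn:ℝ) + α + k))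
        / ((Nat.factorial (n-jn) : ℝ) * (Nat.factorial jn : ℝ)) := by
    unfold gbinom
    rw [div_mul_div_comm]
    congr 1
    rw [← claimA n jn hjn ((mn:ℝ) + α)]
    congr 1
    · apply Finset.prod_congr rfl; intro i _; ring
    · apply Finset.prod_congr rfl; intro i _
      have : (jn:ℝ) + mn + α - 1 - i = (mn:ℝ) + α + jn - 1 - i := by ring
      rw [this]
  have hsign : (-1:ℝ)^(jn+mn) * ((-1:ℝ)^(n-mn)) * ((-1:ℝ)^jn) = (-1:ℝ)^n := by
    rw [← pow_add, ← pow_add, show jn + mn + (n - mn) + jn = n + 2*jn from by omega,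
      pow_add, pow_mul]
    norm_num
  have hrw : (-1:ℝ) ^ (jn + mn) * (((jn:ℝ) + mn + α) / α) *
        gbinom (n + (jn:ℝ) + α) (n - mn) * gbinom (n + (mn:ℝ) + α) (n - jn) *
        gbinom ((jn:ℝ) + mn + α - 1) jn * gbinom ((jn:ℝ) + mn + α - 1) mn
      = (-1:ℝ) ^ (jn + mn) * (((jn:ℝ) + mn + α) / α) *
        ((gbinom (n + (jn:ℝ) + α) (n - mn) * gbinom ((jn:ℝ) + mn + α - 1) mn) *
         (gbinom (n + (mn:ℝ) + α) (n - jn) * gbinom ((jn:ℝ) + mn + α - 1) jn)) := by ring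
  rw [hrw, eA, eB, h1, h2, h3, h4]
  have hF1 : (Nat.factorial (n-mn) : ℝ) ≠ 0 := Nat.cast_ne_zero.mpr (Nat.factorial_ne_zero _)
  have hF2 : (Nat.factorial (n-jn) : ℝ) ≠ 0 := Nat.cast_ne_zero.mpr (Nat.factorial_ne_zero _)
  have hF3 : (Nat.factorial jn : ℝ) ≠ 0 := Nat.cast_ne_zero.mpr (Nat.factorial_ne_zero _)
  have hF4 : (Nat.factorial mn : ℝ) ≠ 0 := Nat.cast_ne_zero.mpr (Nat.factorial_ne_zero _)
  field_simp
  linear_combination ((jn:ℝ) + mn + α) * hsign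

theorem inverse_generalized_Hilbert (n : ℕ) (α : ℝ) (hα : 0 < α)
    (H B : Matrix (Fin (n + 1)) (Fin (n + 1)) ℝ)
    (hH : ∀ l j : Fin (n + 1), H l j = α / ((l : ℕ) + (j : ℕ) + α))
    (hB : ∀ l j : Fin (n + 1), B l j =
      (-1 : ℝ) ^ ((l : ℕ) + (j : ℕ)) * (((l : ℕ) + (j : ℕ) + α) / α) *
        gbinom (n + (l : ℕ) + α) (n - (j : ℕ)) * gbinom (n + (j : ℕ) + α) (n - (l : ℕ)) *
        gbinom ((l : ℕ) + (j : ℕ) + α - 1) (l : ℕ) *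
        gbinom ((l : ℕ) + (j : ℕ) + α - 1) (j : ℕ)) :
    H * B = 1 ∧ B * H = 1 := by
  have key : H * B = 1 := by
    ext l m
    rw [Matrix.mul_apply, Matrix.one_apply]
    set v : Fin (n+1) → ℝ := fun j => -(((j:ℕ):ℝ)) - α with hv
    have hvinj : Set.InjOn v (Finset.univ : Finset (Fin (n+1))) := by
      intro a _ b _ hab
      simp only [hv] at hab
      have hc : ((a:ℕ):ℝ) = ((b:ℕ):ℝ) := by linarith
      exact Fin.ext (Nat.cast_injective hc)
    set f : Polynomial ℝ :=
      ∏ i ∈ Finset.univ.erase m, (Polynomial.X - Polynomial.C ((i:ℕ):ℝ)) with hf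
    have hdeg : f.degree < (Finset.univ : Finset (Fin (n+1))).card := by
      rw [hf, Polynomial.degree_prod]
      simp only [Polynomial.degree_X_sub_C, Finset.sum_const,
        Finset.card_erase_of_mem (Finset.mem_univ m), Finset.card_univ, Fintype.card_fin,
        nsmul_eq_mul, mul_one]
      exact_mod_cast Nat.lt_succ_self n
    have hinterp := Lagrange.eq_interpolate (f := f) hvinj hdeg
    have hE : (∏ i ∈ Finset.univ.erase m, (((l:ℕ):ℝ) - ((i:ℕ):ℝ)))
        = ∑ jj ∈ (Finset.univ : Finset (Fin (n+1))), (Polynomial.eval (v jj) f) *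
            ∏ k ∈ Finset.univ.erase jj, ((v jj - v k)⁻¹ * (((l:ℕ):ℝ) - v k)) := by
      have h := congrArg (Polynomial.eval (((l:ℕ):ℝ))) hinterp
      rw [Lagrange.interpolate_apply] at h
      simpa [Polynomial.eval_finset_sum, Lagrange.basis, Lagrange.basisDivisor,
        Polynomial.eval_prod, hf] using h
    have hEj : ∀ jj : Fin (n+1), Polynomial.eval (v jj) f
        = ∏ i ∈ Finset.univ.erase m, (v jj - ((i:ℕ):ℝ)) := by
      intro jj; simp [hf, Polynomial.eval_prod]
    -- abbreviations
    set Pm : ℝ := ∏ k ∈ (Finset.univ : Finset (Fin (n+1))), (((m:ℕ):ℝ) + ((k:ℕ):ℝ) + α) with hPm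
    set Pl : ℝ := ∏ k ∈ (Finset.univ : Finset (Fin (n+1))), (((l:ℕ):ℝ) + ((k:ℕ):ℝ) + α) with hPl
    set Dm : ℝ := ∏ i ∈ Finset.univ.erase m, (((m:ℕ):ℝ) - ((i:ℕ):ℝ)) with hDm
    have hPl0 : Pl ≠ 0 := by
      rw [hPl]
      apply Finset.prod_ne_zero_iff.mpr
      intro k _
      positivity
    have hDm0 : Dm ≠ 0 := by
      rw [hDm]
      apply Finset.prod_ne_zero_iff.mpr
      intro i hi
      rw [Finset.mem_erase] at hi
      have : (i:ℕ) ≠ (m:ℕ) := fun h => hi.1 (Fin.ext h)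
      have : ((i:ℕ):ℝ) ≠ ((m:ℕ):ℝ) := fun h => this (Nat.cast_injective h)
      exact sub_ne_zero.mpr (Ne.symm this)
    have hDj0 : ∀ jj : Fin (n+1),
        (∏ k ∈ Finset.univ.erase jj, (((k:ℕ):ℝ) - ((jj:ℕ):ℝ))) ≠ 0 := by
      intro jj
      apply Finset.prod_ne_zero_iff.mpr
      intro k hk
      rw [Finset.mem_erase] at hk
      have h1 : (k:ℕ) ≠ (jj:ℕ) := fun h => hk.1 (Fin.ext h)
      have h2 : ((k:ℕ):ℝ) ≠ ((jj:ℕ):ℝ) := fun h => h1 (Nat.cast_injective h)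
      exact sub_ne_zero.mpr h2
    have hbp : ∀ jj : Fin (n+1),
        ∏ k ∈ Finset.univ.erase jj, ((v jj - v k)⁻¹ * (((l:ℕ):ℝ) - v k))
        = (∏ k ∈ Finset.univ.erase jj, (((k:ℕ):ℝ) - ((jj:ℕ):ℝ)))⁻¹ *
            (Pl / (((l:ℕ):ℝ) + ((jj:ℕ):ℝ) + α)) := by
      intro jj
      rw [Finset.prod_mul_distrib, Finset.prod_inv_distrib]
      congr 1
      · congr 1
        apply Finset.prod_congr rfl
        intro k _
        simp only [hv]; ring
      · have h1 : ∀ k ∈ Finset.univ.erase jj, (((l:ℕ):ℝ) - v k) = (((l:ℕ):ℝ) + ((k:ℕ):ℝ) + α) := by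
          intro k _; simp only [hv]; ring
        rw [Finset.prod_congr rfl h1, eq_div_iff (by positivity)]
        rw [hPl, ← Finset.mul_prod_erase Finset.univ _ (Finset.mem_univ jj)]
        ring
    have hterm : ∀ jj : Fin (n+1), H l jj * B jj m
        = (Pm / (Dm * Pl)) * ((Polynomial.eval (v jj) f) *
            ∏ k ∈ Finset.univ.erase jj, ((v jj - v k)⁻¹ * (((l:ℕ):ℝ) - v k))) := by
      intro jj
      rw [hH l jj, hEj jj, hbp jj]
      set Dj : ℝ := ∏ k ∈ Finset.univ.erase jj, (((k:ℕ):ℝ) - ((jj:ℕ):ℝ)) with hDjd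
      have hDjne : Dj ≠ 0 := by rw [hDjd]; exact hDj0 jj
      have hL : (((l:ℕ):ℝ) + ((jj:ℕ):ℝ) + α) ≠ 0 := by positivity
      have hKI' : α * B jj m * Dm * Dj
          = Pm * ∏ i ∈ Finset.univ.erase m, (v jj - ((i:ℕ):ℝ)) := by
        rw [hB jj m, hDm, hDjd, hPm]
        exact KI n α hα jj m
      field_simp
      linear_combination hKI'
    rw [Finset.sum_congr rfl (fun jj _ => hterm jj), ← Finset.mul_sum, ← hE]
    by_cases hlm : l = m
    · subst hlm
      rw [if_pos rfl]
      rw [← hDm]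
      field_simp
      rw [hPm]
    · rw [if_neg hlm]
      have h0 : (∏ i ∈ Finset.univ.erase m, (((l:ℕ):ℝ) - ((i:ℕ):ℝ))) = 0 := by
        apply Finset.prod_eq_zero (Finset.mem_erase.mpr ⟨hlm, Finset.mem_univ l⟩)
        exact sub_self _
      rw [h0, mul_zero]
  exact ⟨key, mul_eq_one_comm.mp key⟩
end

section
/- If 2 sinh θ is a positive integer, then all generalized Fibonomial coefficients (n choose k)_{F(θ)} are integers. -/
def fseq (m : ℕ) : ℕ → ℤ
  | 0 => 0
  | 1 => 1
  | n + 2 => m * fseq m (n + 1) + fseq m n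

def Cseq (m : ℕ) : ℕ → ℕ → ℤ
  | _, 0 => 1
  | 0, _ + 1 => 0
  | n + 1, k + 1 => fseq m (n - k + 1) * Cseq m n k + fseq m k * Cseq m n (k + 1)

lemma fpos (m : ℕ) (hm : 1 ≤ m) : ∀ n, 0 < fseq m (n + 1) := by
  intro n
  induction n using Nat.twoStepInduction with
  | zero => simp [fseq]
  | one => simp [fseq]; omega
  | more n ih1 ih2 =>
    show 0 < (m : ℤ) * fseq m (n + 2) + fseq m (n + 1)
    have hm' : (1 : ℤ) ≤ m := by exact_mod_cast hm
    nlinarith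

lemma fnonneg (m : ℕ) (hm : 1 ≤ m) : ∀ n, 0 ≤ fseq m n := by
  intro n
  cases n with
  | zero => simp [fseq]
  | succ n => exact (fpos m hm n).le

lemma fadd (m : ℕ) : ∀ a b, fseq m (a + b + 1) =
    fseq m (a + 1) * fseq m (b + 1) + fseq m a * fseq m b := by
  intro a
  induction a using Nat.twoStepInduction with
  | zero => intro b; simp [fseq]
  | one =>
    intro b
    have h : 1 + b + 1 = b + 2 := by omega
    rw [h]
    show (m : ℤ) * fseq m (b + 1) + fseq m b = _
    have h2 : fseq m 2 = (m : ℤ) := by simp [fseq]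
    rw [h2]
    simp [fseq]
  | more a ih1 ih2 =>
    intro b
    have h : a + 2 + b + 1 = (a + b + 1) + 2 := by omega
    rw [h]
    show (m : ℤ) * fseq m (a + b + 1 + 1) + fseq m (a + b + 1) = _
    have h1 : a + b + 1 + 1 = (a + 1) + b + 1 := by omega
    rw [h1, ih2 b, ih1 b]
    have h3 : fseq m (a + 3) = (m : ℤ) * fseq m (a + 2) + fseq m (a + 1) := rfl
    have h4 : fseq m (a + 2) = (m : ℤ) * fseq m (a + 1) + fseq m a := rfl
    rw [show a + 2 + 1 = a + 3 from rfl, h3, h4]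
    ring

lemma Czero (m : ℕ) : ∀ n k, n < k → Cseq m n k = 0 := by
  intro n
  induction n with
  | zero => intro k hk; match k, hk with | k + 1, _ => rfl
  | succ n ih =>
    intro k hk
    match k, hk with
    | k + 1, hk =>
      show fseq m (n - k + 1) * Cseq m n k + fseq m k * Cseq m n (k + 1) = 0
      rw [ih k (by omega), ih (k + 1) (by omega)]
      ring

lemma key (m : ℕ) : ∀ n k, k ≤ n →
    (∏ j ∈ Finset.range k, fseq m (j + 1)) * Cseq m n k =
      ∏ j ∈ Finset.range k, fseq m (n - j) := by
  intro n
  induction n with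
  | zero =>
    intro k hk
    interval_cases k
    simp [Cseq]
  | succ n ih =>
    intro k hk
    cases k with
    | zero => simp [Cseq]
    | succ k =>
      have hk' : k ≤ n := by omega
      have hC : Cseq m (n + 1) (k + 1) =
          fseq m (n - k + 1) * Cseq m n k + fseq m k * Cseq m n (k + 1) := rfl
      have hP : ∏ j ∈ Finset.range (k + 1), fseq m (j + 1) =
          (∏ j ∈ Finset.range k, fseq m (j + 1)) * fseq m (k + 1) :=
        Finset.prod_range_succ _ _
      have hQ : ∏ j ∈ Finset.range (k + 1), fseq m (n + 1 - j) =
          (∏ j ∈ Finset.range k, fseq m (n - j)) * fseq m (n + 1) := by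
        rw [Finset.prod_range_succ']
        congr 1
        apply Finset.prod_congr rfl
        intro j hj
        congr 1
        omega
      have H1 := ih k hk'
      have H2 : (∏ j ∈ Finset.range k, fseq m (j + 1)) * fseq m (k + 1) *
          Cseq m n (k + 1) = (∏ j ∈ Finset.range k, fseq m (n - j)) * fseq m (n - k) := by
        rcases Nat.lt_or_ge k n with h | h
        · have := ih (k + 1) (by omega)
          rw [hP] at this
          rw [this, Finset.prod_range_succ]
        · have hkn : k = n := by omega
          subst hkn
          rw [Czero m k (k + 1) (by omega)]
          simp [fseq]
      rw [hC, hP, hQ]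
      have hadd : fseq m (n + 1) =
          fseq m (k + 1) * fseq m (n - k + 1) + fseq m k * fseq m (n - k) := by
        have := fadd m k (n - k)
        rwa [show k + (n - k) + 1 = n + 1 by omega] at this
      have hnk : n - k + 1 = n + 1 - k := by omega
      calc (∏ j ∈ Finset.range k, fseq m (j + 1)) * fseq m (k + 1) *
            (fseq m (n - k + 1) * Cseq m n k + fseq m k * Cseq m n (k + 1))
          = fseq m (k + 1) * fseq m (n - k + 1) *
              ((∏ j ∈ Finset.range k, fseq m (j + 1)) * Cseq m n k) +
            fseq m k * ((∏ j ∈ Finset.range k, fseq m (j + 1)) * fseq m (k + 1) *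
              Cseq m n (k + 1)) := by ring
        _ = fseq m (k + 1) * fseq m (n - k + 1) *
              (∏ j ∈ Finset.range k, fseq m (n - j)) +
            fseq m k * ((∏ j ∈ Finset.range k, fseq m (n - j)) * fseq m (n - k)) := by
            rw [H1, H2]
        _ = (∏ j ∈ Finset.range k, fseq m (n - j)) * fseq m (n + 1) := by
            rw [hadd]; ring

theorem fibinom_integer (θ : ℝ) (hθ : 0 < θ) (m : ℕ) (hm : 1 ≤ m)
    (hsinh : 2 * Real.sinh θ = m) (F : ℕ → ℝ)
    (h0 : F 0 = 0) (h1 : F 1 = 1)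
    (hrec : ∀ n : ℕ, 1 ≤ n → F (n + 1) = 2 * Real.sinh θ * F n + F (n - 1)) :
    ∀ n k : ℕ, k ≤ n → ∃ z : ℤ, (∏ j ∈ Finset.range k, F (n - j) / F (j + 1)) = z := by
  have hF : ∀ n, F n = (fseq m n : ℝ) := by
    intro n
    induction n using Nat.twoStepInduction with
    | zero => simpa [fseq]
    | one => simpa [fseq]
    | more n ih1 ih2 =>
      have := hrec (n + 1) (by omega)
      rw [show n + 1 - 1 = n from rfl] at this
      rw [show n + 2 = n + 1 + 1 from rfl, this, hsinh, ih1, ih2]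
      have hstep : fseq m (n + 1 + 1) = (m : ℤ) * fseq m (n + 1) + fseq m n := rfl
      rw [hstep]
      push_cast
      ring
  intro n k hk
  refine ⟨Cseq m n k, ?_⟩
  have hprod : (∏ j ∈ Finset.range k, F (n - j) / F (j + 1)) =
      (∏ j ∈ Finset.range k, F (n - j)) / (∏ j ∈ Finset.range k, F (j + 1)) :=
    Finset.prod_div_distrib _ _
  rw [hprod]
  have hA : (∏ j ∈ Finset.range k, F (j + 1)) =
      ((∏ j ∈ Finset.range k, fseq m (j + 1) : ℤ) : ℝ) := by
    push_cast
    exact Finset.prod_congr rfl fun j _ => hF (j + 1)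
  have hB : (∏ j ∈ Finset.range k, F (n - j)) =
      ((∏ j ∈ Finset.range k, fseq m (n - j) : ℤ) : ℝ) := by
    push_cast
    exact Finset.prod_congr rfl fun j _ => hF (n - j)
  rw [hA, hB]
  have hApos : (0 : ℤ) < ∏ j ∈ Finset.range k, fseq m (j + 1) :=
    Finset.prod_pos fun j _ => fpos m hm j
  have hAne : ((∏ j ∈ Finset.range k, fseq m (j + 1) : ℤ) : ℝ) ≠ 0 := by
    exact_mod_cast hApos.ne'
  rw [div_eq_iff hAne]
  rw [← Int.cast_mul]
  congr 1
  rw [mul_comm]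
  exact (key m n k hk).symm
end

section
/- For q = −e^{−2θ} with θ > 0, the generalized quantum Hilbert matrix satisfies H_n^{(α)}(q) = U_n F_n^{(α)}(θ) U_n, where U_n is the diagonal matrix with entries i^l, l = 0,…,n, H_n^{(α)}(q) = ([α]_q/[l+j+α]_q), and F_n^{(α)}(θ) = (F_α(θ)/F_{l+j+α}(θ)). -/
noncomputable def genFib (θ : ℝ) (m : ℕ) : ℂ :=
  (Complex.exp (m * θ) - (-1 : ℂ) ^ m * Complex.exp (-(m * θ))) /
    (Complex.exp θ + Complex.exp (-θ))

lemma key_s16 (θ : ℝ) (m : ℕ) :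
    qint (Complex.I * Complex.exp (-θ)) m = -(-Complex.I) ^ (m + 1) * genFib θ m := by
  unfold qint genFib
  have hD : Complex.exp θ + Complex.exp (-θ) ≠ 0 := by
    have : (0:ℝ) < Real.exp θ + Real.exp (-θ) := by positivity
    rw [show -(θ:ℂ) = ((-θ : ℝ) : ℂ) by push_cast; ring, ← Complex.ofReal_exp,
      ← Complex.ofReal_exp, ← Complex.ofReal_add]
    exact_mod_cast this.ne'
  have hinv : (Complex.I * Complex.exp (-(θ:ℂ)))⁻¹ = -Complex.I * Complex.exp (θ:ℂ) := by
    rw [mul_inv, Complex.inv_I, ← Complex.exp_neg, neg_neg]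
  rw [hinv, mul_pow, mul_pow, ← Complex.exp_nat_mul, ← Complex.exp_nat_mul,
    show (m:ℂ) * (-θ) = -(m*θ) by ring,
    show Complex.I * Complex.exp (-θ) - -Complex.I * Complex.exp θ
      = Complex.I * (Complex.exp θ + Complex.exp (-θ)) by ring]
  have hIm : (Complex.I:ℂ)^m = (-1:ℂ)^m * (-Complex.I)^m := by
    rw [← mul_pow]; norm_num
  have hI : -(-Complex.I)^(m+1) * Complex.I = -(-Complex.I)^m := by
    rw [pow_succ]; ring_nf; rw [Complex.I_sq]; ring
  rw [← mul_div_assoc, div_eq_div_iff (by simp [Complex.I_ne_zero, hD]) hD]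
  rw [hIm]
  ring_nf
  rw [Complex.I_sq]
  ring

theorem quantum_Hilbert_unitarily_related (θ : ℝ) (hθ : 0 < θ) (n α : ℕ) (hα : 1 ≤ α)
    (H F U : Matrix (Fin (n + 1)) (Fin (n + 1)) ℂ)
    (hH : ∀ l j : Fin (n + 1), H l j =
      qint (Complex.I * Complex.exp (-θ)) α /
        qint (Complex.I * Complex.exp (-θ)) ((l : ℕ) + (j : ℕ) + α))
    (hF : ∀ l j : Fin (n + 1), F l j = genFib θ α / genFib θ ((l : ℕ) + (j : ℕ) + α))
    (hU : U = Matrix.diagonal fun l : Fin (n + 1) => Complex.I ^ (l : ℕ)) :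
    H = U * F * U := by
  subst hU
  ext l j
  rw [Matrix.mul_apply]
  simp only [Matrix.diagonal_mul, Matrix.mul_diagonal]
  rw [Finset.sum_eq_single j (fun b _ hb => by
      simp [Matrix.mul_diagonal, Matrix.diagonal_apply_ne _ hb])
    (fun h => absurd (Finset.mem_univ j) h)]
  simp only [Matrix.mul_diagonal, Matrix.diagonal_apply_eq]
  rw [hH, hF, key_s16, key_s16]
  set gα := genFib θ α
  set gm := genFib θ ((l : ℕ) + (j : ℕ) + α)
  have hne : -(-Complex.I) ^ (α + 1) ≠ 0 := by
    simp [Complex.I_ne_zero]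
  have hk : -(-Complex.I) ^ ((l : ℕ) + (j : ℕ) + α + 1) * gm
      = -(-Complex.I) ^ (α + 1) * ((-Complex.I) ^ ((l : ℕ) + (j : ℕ)) * gm) := by
    rw [show (l : ℕ) + (j : ℕ) + α + 1 = (α + 1) + ((l : ℕ) + (j : ℕ)) by omega, pow_add]
    ring
  rw [hk, mul_div_mul_left _ _ hne, ← div_div,
    show gα / (-Complex.I) ^ ((l : ℕ) + (j : ℕ)) = gα * Complex.I ^ ((l : ℕ) + (j : ℕ)) by
      rw [div_eq_mul_inv, ← inv_pow, inv_neg, Complex.inv_I, neg_neg],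
    pow_add]
  ring
end
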